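/- arXiv:1604.06612 — 4 statements merged into one kernel-verified Lean document; each statement's English description precedes it below -/
import Mathlib

section
/- For every z > 0, the Gauss measure of the set of x in [0,1) whose n-th continued fraction digit a_n(x) is at least z equals (1/log 2) · log(1 + 1/⌈z⌉). -/
open MeasureTheory Filter Set

/-- The Gauss map `τ(x) = 1/x - ⌊1/x⌋`, with `τ(0) = 0`. -/
noncomputable def gaussMap (x : ℝ) : ℝ := if x = 0 then 0 else 1 / x - ⌊1 / x⌋

/-- The `n`-th continued fraction digit `a_n(x) = ⌊1/τ^{n-1}(x)⌋`. -/
noncomputable def cfDigit (n : ℕ) (x : ℝ) : ℕ := ⌊1 / (gaussMap^[n - 1] x)⌋₊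

/-- The Gauss measure on `[0,1)` with density `1/((x+1) log 2)`. -/
noncomputable def gaussMeasure : Measure ℝ :=
  (volume.restrict (Set.Ico (0 : ℝ) 1)).withDensity
    (fun x => ENNReal.ofReal (1 / ((x + 1) * Real.log 2)))

lemma measurable_gaussMap : Measurable gaussMap := by
  unfold gaussMap
  refine Measurable.ite (MeasurableSet.singleton 0) measurable_const ?_
  have h1 : Measurable fun x : ℝ => 1 / x := measurable_const.div measurable_id
  exact h1.sub (measurable_from_top.comp h1.floor)

lemma Irrational.one_div {x : ℝ} (hx : Irrational x) : Irrational (1 / x) := by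
  simpa [one_div] using hx.inv

lemma gaussMap_eq_fract {x : ℝ} (hx : x ≠ 0) : gaussMap x = Int.fract (1 / x) := by
  rw [gaussMap, if_neg hx, Int.fract]

lemma irrational_gaussMap {x : ℝ} (hx : Irrational x) : Irrational (gaussMap x) := by
  have hx0 : x ≠ 0 := hx.ne_zero
  rw [gaussMap_eq_fract hx0]
  exact hx.one_div.sub_intCast ⌊1 / x⌋

lemma gaussMap_mem_Ioo {x : ℝ} (hx : Irrational x) : gaussMap x ∈ Set.Ioo (0:ℝ) 1 := by
  have hx0 : x ≠ 0 := hx.ne_zero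
  rw [gaussMap_eq_fract hx0]
  refine ⟨lt_of_le_of_ne (Int.fract_nonneg _) ?_, Int.fract_lt_one _⟩
  intro h
  exact ((irrational_gaussMap hx).ne_zero) (by rw [gaussMap_eq_fract hx0, ← h])

lemma iterate_mem {x : ℝ} (hx : Irrational x) (hx1 : x ∈ Set.Ioo (0:ℝ) 1) (m : ℕ) :
    Irrational (gaussMap^[m] x) ∧ gaussMap^[m] x ∈ Set.Ioo (0:ℝ) 1 := by
  induction m with
  | zero => exact ⟨hx, hx1⟩
  | succ m ih =>
    rw [Function.iterate_succ_apply']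
    exact ⟨irrational_gaussMap ih.1, gaussMap_mem_Ioo ih.1⟩

lemma gaussMeasure_apply {s : Set ℝ} (hs : MeasurableSet s) :
    gaussMeasure s = ∫⁻ x in s ∩ Set.Ico 0 1, ENNReal.ofReal (1 / ((x + 1) * Real.log 2)) := by
  rw [gaussMeasure, withDensity_apply _ hs, Measure.restrict_restrict hs]

lemma gaussMeasure_null {s : Set ℝ} (hs : MeasurableSet s) (h : volume s = 0) :
    gaussMeasure s = 0 := by
  rw [gaussMeasure_apply hs]
  have : volume (s ∩ Set.Ico (0:ℝ) 1) = 0 :=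
    le_antisymm (h ▸ measure_mono Set.inter_subset_left) (zero_le)
  rw [setLIntegral_measure_zero _ _ this]

lemma rat_set_null : gaussMeasure {x : ℝ | ¬ Irrational x} = 0 := by
  have h1 : {x : ℝ | ¬ Irrational x} = Set.range ((↑) : ℚ → ℝ) := by
    ext x; simp [Irrational]
  rw [h1]
  exact gaussMeasure_null (Set.countable_range _).measurableSet
    ((Set.countable_range _).measure_zero _)

lemma measurableSet_irrational : MeasurableSet {x : ℝ | Irrational x} := by
  have : {x : ℝ | Irrational x} = (Set.range ((↑) : ℚ → ℝ))ᶜ := by ext x; simp [Irrational]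
  rw [this]
  exact (Set.countable_range _).measurableSet.compl

lemma gaussMeasure_Ioo {a b : ℝ} (ha : 0 ≤ a) (hab : a ≤ b) (hb : b ≤ 1) :
    gaussMeasure (Set.Ioo a b) =
      ENNReal.ofReal ((Real.log (1 + b) - Real.log (1 + a)) / Real.log 2) := by
  have hsub : Set.Ioo a b ∩ Set.Ico (0:ℝ) 1 = Set.Ioo a b := by
    refine Set.inter_eq_left.mpr fun x hx => ⟨le_of_lt (lt_of_le_of_lt ha hx.1), lt_of_lt_of_le hx.2 hb⟩
  rw [gaussMeasure_apply measurableSet_Ioo, hsub]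
  have hlog2 : (0:ℝ) < Real.log 2 := Real.log_pos (by norm_num)
  have hcont : ContinuousOn (fun x : ℝ => 1 / ((x + 1) * Real.log 2)) (Set.Icc a b) := by
    apply ContinuousOn.div continuousOn_const
    · exact ((continuousOn_id.add continuousOn_const).mul continuousOn_const)
    · intro x hx
      have : 0 < x + 1 := by linarith [hx.1]
      positivity
  have hint : IntegrableOn (fun x : ℝ => 1 / ((x + 1) * Real.log 2)) (Set.Ioo a b) :=
    (hcont.integrableOn_Icc).mono_set Set.Ioo_subset_Icc_self
  rw [← ofReal_integral_eq_lintegral_ofReal hint]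
  · congr 1
    have h1 : ∫ x in Set.Ioo a b, 1 / ((x + 1) * Real.log 2)
        = ∫ x in a..b, 1 / ((x + 1) * Real.log 2) := by
      rw [intervalIntegral.integral_of_le hab, ← MeasureTheory.integral_Ioc_eq_integral_Ioo]
    rw [h1]
    have h2 : ∀ x : ℝ, 1 / ((x + 1) * Real.log 2) = (Real.log 2)⁻¹ * (1/(x+1)) := by
      intro x; field_simp
    simp_rw [h2]
    rw [intervalIntegral.integral_const_mul]
    have h3 : ∫ x in a..b, 1/(x+1) = Real.log (1 + b) - Real.log (1 + a) := by
      have := intervalIntegral.integral_comp_add_right (a := a) (b := b) (fun x : ℝ => 1/x) 1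
      rw [this, integral_one_div (by intro h; rw [Set.mem_uIcc] at h; rcases h with h|h <;> linarith),
        Real.log_div (by linarith) (by linarith)]
      ring_nf
    rw [h3]; field_simp
  · refine (ae_restrict_iff' measurableSet_Ioo).mpr (ae_of_all _ fun x hx => ?_)
    have h1 : (0:ℝ) < x + 1 := by linarith [ha.trans_lt hx.1]
    have hlog2 : (0:ℝ) < Real.log 2 := Real.log_pos (by norm_num)
    positivity

lemma telescope (a b : ℝ) (ha : 0 ≤ a) (hab : a ≤ b) (hb : b ≤ 1) :
    ∑' j : ℕ, ENNReal.ofReal ((Real.log (1 + 1/((j:ℝ)+1+a)) - Real.log (1 + 1/((j:ℝ)+1+b))) / Real.log 2)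
      = ENNReal.ofReal ((Real.log (1 + b) - Real.log (1 + a)) / Real.log 2) := by
  have hlog2 : (0:ℝ) < Real.log 2 := Real.log_pos (by norm_num)
  set d : ℕ → ℝ := fun j => Real.log ((j:ℝ)+1+b) - Real.log ((j:ℝ)+1+a) with hd
  have hpos : ∀ j : ℕ, (0:ℝ) < (j:ℝ)+1+a := fun j => by positivity
  have hposb : ∀ j : ℕ, (0:ℝ) < (j:ℝ)+1+b := fun j => by
    have := hpos j; linarith
  have hterm : ∀ j : ℕ,
      Real.log (1 + 1/((j:ℝ)+1+a)) - Real.log (1 + 1/((j:ℝ)+1+b)) = d j - d (j+1) := by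
    intro j
    have e1 : (1:ℝ) + 1/((j:ℝ)+1+a) = ((j:ℝ)+1+1+a)/((j:ℝ)+1+a) := by
      field_simp; ring
    have e2 : (1:ℝ) + 1/((j:ℝ)+1+b) = ((j:ℝ)+1+1+b)/((j:ℝ)+1+b) := by
      have hne : (j:ℝ)+1+b ≠ 0 := (hposb j).ne'
      field_simp
      ring
    rw [e1, e2, Real.log_div (by have := hpos (j+1); push_cast at this ⊢; linarith) (hpos j).ne',
      Real.log_div (by have := hposb (j+1); push_cast at this ⊢; linarith) (hposb j).ne']
    show _ = (Real.log ((j:ℝ)+1+b) - Real.log ((j:ℝ)+1+a)) -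
      (Real.log ((↑(j+1):ℝ)+1+b) - Real.log ((↑(j+1):ℝ)+1+a))
    push_cast
    ring
  have hdmono : ∀ j : ℕ, d (j+1) ≤ d j := by
    intro j
    have h1 : Real.log (1 + 1/((j:ℝ)+1+a)) - Real.log (1 + 1/((j:ℝ)+1+b)) ≥ 0 := by
      have : 1/((j:ℝ)+1+b) ≤ 1/((j:ℝ)+1+a) :=
        one_div_le_one_div_of_le (hpos j) (by linarith)
      have h2 : (0:ℝ) < 1 + 1/((j:ℝ)+1+b) := by
        have := (hposb j); positivity
      have h4 : (1:ℝ) + 1 / (↑j + 1 + b) ≤ 1 + 1 / (↑j + 1 + a) := by linarith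
      have := Real.log_le_log h2 h4
      linarith
    rw [hterm j] at h1; linarith
  have hd0 : Tendsto d atTop (nhds 0) := by
    have h1 : ∀ j : ℕ, d j = Real.log (((j:ℝ)+1+b)/((j:ℝ)+1+a)) := by
      intro j; rw [Real.log_div (hposb j).ne' (hpos j).ne']
    have h2 : Tendsto (fun j : ℕ => ((j:ℝ)+1+b)/((j:ℝ)+1+a)) atTop (nhds 1) := by
      have e : ∀ j : ℕ, ((j:ℝ)+1+b)/((j:ℝ)+1+a) = 1 + (b-a)/((j:ℝ)+1+a) := by
        intro j; field_simp; ring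
      simp_rw [e]
      have : Tendsto (fun j : ℕ => (b-a)/((j:ℝ)+1+a)) atTop (nhds 0) := by
        apply Tendsto.div_atTop tendsto_const_nhds
        apply tendsto_atTop_add_const_right
        exact tendsto_atTop_add_const_right _ _ tendsto_natCast_atTop_atTop
      simpa using tendsto_const_nhds.add this
    have h3 : Tendsto (fun j : ℕ => Real.log (((j:ℝ)+1+b)/((j:ℝ)+1+a))) atTop (nhds 0) := by
      have := (Real.continuousAt_log (by norm_num : (1:ℝ) ≠ 0)).tendsto.comp h2
      simpa [Function.comp_def] using this
    simpa [← h1] using h3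
  have hsum : HasSum (fun j : ℕ => d j - d (j+1)) (d 0) := by
    rw [hasSum_iff_tendsto_nat_of_nonneg (fun j => by linarith [hdmono j])]
    have e : ∀ n : ℕ, ∑ i ∈ Finset.range n, (d i - d (i+1)) = d 0 - d n :=
      fun n => Finset.sum_range_sub' d n
    simp_rw [e]
    simpa using tendsto_const_nhds.sub hd0
  have hsum2 : HasSum (fun j : ℕ => (d j - d (j+1)) / Real.log 2) (d 0 / Real.log 2) :=
    hsum.div_const _
  simp_rw [hterm]
  rw [← ENNReal.ofReal_tsum_of_nonneg
    (fun j => div_nonneg (by linarith [hdmono j]) hlog2.le) hsum2.summable]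
  rw [hsum2.tsum_eq]
  simp [hd]


lemma measurableSet_T (m : ℕ) (a b : ℝ) :
    MeasurableSet {x : ℝ | Irrational x ∧ gaussMap^[m] x ∈ Set.Ioo a b} := by
  exact measurableSet_irrational.inter
    ((measurable_gaussMap.iterate m) measurableSet_Ioo)

lemma gaussMeasure_inter_Ico {s : Set ℝ} (hs : MeasurableSet s) :
    gaussMeasure s = gaussMeasure (s ∩ Set.Ico 0 1) := by
  rw [gaussMeasure_apply hs, gaussMeasure_apply (hs.inter measurableSet_Ico),
    Set.inter_assoc, Set.inter_self]

lemma key (m : ℕ) : ∀ a b : ℝ, 0 ≤ a → a ≤ b → b ≤ 1 →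
    gaussMeasure {x | Irrational x ∧ gaussMap^[m] x ∈ Set.Ioo a b} =
      ENNReal.ofReal ((Real.log (1 + b) - Real.log (1 + a)) / Real.log 2) := by
  induction m with
  | zero =>
    intro a b ha hab hb
    simp only [Function.iterate_zero, id_eq]
    have hle : gaussMeasure {x | Irrational x ∧ x ∈ Set.Ioo a b} ≤ gaussMeasure (Set.Ioo a b) :=
      measure_mono (fun x hx => hx.2)
    have hge : gaussMeasure (Set.Ioo a b) ≤ gaussMeasure {x | Irrational x ∧ x ∈ Set.Ioo a b} := by
      have hsub : Set.Ioo a b ⊆ {x | Irrational x ∧ x ∈ Set.Ioo a b} ∪ {x | ¬ Irrational x} := by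
        intro x hx
        by_cases h : Irrational x
        · exact Or.inl ⟨h, hx⟩
        · exact Or.inr h
      calc gaussMeasure (Set.Ioo a b)
          ≤ gaussMeasure ({x | Irrational x ∧ x ∈ Set.Ioo a b} ∪ {x | ¬ Irrational x}) :=
            measure_mono hsub
        _ ≤ gaussMeasure {x | Irrational x ∧ x ∈ Set.Ioo a b}
            + gaussMeasure {x | ¬ Irrational x} := measure_union_le _ _
        _ = gaussMeasure {x | Irrational x ∧ x ∈ Set.Ioo a b} := by rw [rat_set_null, add_zero]
    rw [le_antisymm hle hge, gaussMeasure_Ioo ha hab hb]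
  | succ m ih =>
    intro a b ha hab hb
    set T : ℕ → Set ℝ := fun j =>
      {x | Irrational x ∧ gaussMap^[m] x ∈ Set.Ioo (1/((j:ℝ)+1+b)) (1/((j:ℝ)+1+a))} with hT
    have hpos : ∀ j : ℕ, (0:ℝ) < (j:ℝ)+1+a := fun j => by positivity
    have hposb : ∀ j : ℕ, (0:ℝ) < (j:ℝ)+1+b := fun j => by have := hpos j; linarith
    -- set equality within Ico 0 1
    have hseteq : {x | Irrational x ∧ gaussMap^[m+1] x ∈ Set.Ioo a b} ∩ Set.Ico 0 1
        = (⋃ j : ℕ, T j) ∩ Set.Ico 0 1 := by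
      ext x
      simp only [Set.mem_inter_iff, Set.mem_iUnion, Set.mem_setOf_eq, hT]
      constructor
      · rintro ⟨⟨hirr, hmem⟩, hico⟩
        refine ⟨?_, hico⟩
        have hx1 : x ∈ Set.Ioo (0:ℝ) 1 :=
          ⟨lt_of_le_of_ne hico.1 (fun h => hirr.ne_zero h.symm), hico.2⟩
        obtain ⟨hyirr, hy⟩ := iterate_mem hirr hx1 m
        set y := gaussMap^[m] x with hy'
        rw [Function.iterate_succ_apply'] at hmem
        have hy0 : y ≠ 0 := hyirr.ne_zero
        have h1y : 1 < 1/y := one_lt_one_div hy.1 hy.2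
        have hfl : 1 ≤ ⌊1/y⌋ := Int.le_floor.mpr (by push_cast; linarith)
        rw [gaussMap, if_neg hy0] at hmem
        refine ⟨(⌊1/y⌋ - 1).toNat, hirr, ?_, ?_⟩
        · -- 1/(j+1+b) < y
          have h0 : ((((⌊1/y⌋ - 1).toNat : ℕ)):ℝ) = (⌊1/y⌋:ℝ) - 1 := by
            exact_mod_cast Int.toNat_of_nonneg (by omega : (0:ℤ) ≤ ⌊1/y⌋ - 1)
          have hj : ((((⌊1/y⌋ - 1).toNat : ℕ)):ℝ) + 1 = (⌊1/y⌋ : ℝ) := by rw [h0]; ring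
          rw [hj]
          have h2 : 1/y < (⌊1/y⌋ : ℝ) + b := by
            have := hmem.2; linarith
          have h3 : (0:ℝ) < 1/y := by positivity
          have := one_div_lt_one_div_of_lt h3 h2
          rwa [one_div_one_div] at this
        · have h0 : ((((⌊1/y⌋ - 1).toNat : ℕ)):ℝ) = (⌊1/y⌋:ℝ) - 1 := by
            exact_mod_cast Int.toNat_of_nonneg (by omega : (0:ℤ) ≤ ⌊1/y⌋ - 1)
          have hj : ((((⌊1/y⌋ - 1).toNat : ℕ)):ℝ) + 1 = (⌊1/y⌋ : ℝ) := by rw [h0]; ring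
          rw [hj]
          have h2 : (⌊1/y⌋ : ℝ) + a < 1/y := by
            have := hmem.1; linarith
          have hfa : (0:ℝ) < (⌊1/y⌋ : ℝ) + a := by
            have : (1:ℝ) ≤ (⌊1/y⌋:ℝ) := by exact_mod_cast hfl
            linarith
          have := one_div_lt_one_div_of_lt hfa h2
          rwa [one_div_one_div] at this
      · rintro ⟨⟨j, hirr, hy1, hy2⟩, hico⟩
        refine ⟨⟨hirr, ?_⟩, hico⟩
        have hx1 : x ∈ Set.Ioo (0:ℝ) 1 :=
          ⟨lt_of_le_of_ne hico.1 (fun h => hirr.ne_zero h.symm), hico.2⟩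
        obtain ⟨hyirr, hy⟩ := iterate_mem hirr hx1 m
        set y := gaussMap^[m] x with hy'
        rw [Function.iterate_succ_apply', gaussMap, if_neg hyirr.ne_zero]
        have hy0 : 0 < y := hy.1
        have h1 : (j:ℝ)+1+a < 1/y := by
          have := one_div_lt_one_div_of_lt hy0 hy2
          rwa [one_div_one_div] at this
        have h2 : 1/y < (j:ℝ)+1+b := by
          have := one_div_lt_one_div_of_lt (one_div_pos.mpr (hposb j)) hy1
          rwa [one_div_one_div] at this
        have hfl : ⌊1/y⌋ = (j:ℤ) + 1 := by
          rw [Int.floor_eq_iff]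
          constructor
          · push_cast; linarith
          · push_cast; linarith
        rw [hfl]
        constructor
        · push_cast; linarith
        · push_cast; linarith
    have hdisjaux : ∀ i j : ℕ, i < j → Disjoint (T i) (T j) := by
      intro i j h
      refine Set.disjoint_left.mpr ?_
      rintro x ⟨_, hx1, hx2⟩ ⟨_, hx3, hx4⟩
      have hij1 : (i:ℝ) + 1 ≤ (j:ℝ) := by exact_mod_cast h
      have h6 : 1/((j:ℝ)+1+a) ≤ 1/((i:ℝ)+1+b) :=
        one_div_le_one_div_of_le (hposb i) (by linarith)
      linarith
    have hdisj : Pairwise (Function.onFun Disjoint T) := by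
      intro i j hij
      rcases hij.lt_or_gt with h|h
      · exact hdisjaux i j h
      · exact (hdisjaux j i h).symm
    have hmT : ∀ j, MeasurableSet (T j) := fun j => measurableSet_T m _ _
    calc gaussMeasure {x | Irrational x ∧ gaussMap^[m+1] x ∈ Set.Ioo a b}
        = gaussMeasure ({x | Irrational x ∧ gaussMap^[m+1] x ∈ Set.Ioo a b} ∩ Set.Ico 0 1) :=
          gaussMeasure_inter_Ico (measurableSet_T (m+1) a b)
      _ = gaussMeasure ((⋃ j : ℕ, T j) ∩ Set.Ico 0 1) := by rw [hseteq]
      _ = gaussMeasure (⋃ j : ℕ, T j) :=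
          (gaussMeasure_inter_Ico (MeasurableSet.iUnion hmT)).symm
      _ = ∑' j : ℕ, gaussMeasure (T j) := measure_iUnion hdisj hmT
      _ = ∑' j : ℕ, ENNReal.ofReal
            ((Real.log (1 + 1/((j:ℝ)+1+a)) - Real.log (1 + 1/((j:ℝ)+1+b))) / Real.log 2) := by
          refine tsum_congr fun j => ?_
          rw [hT]
          exact ih _ _ (one_div_nonneg.mpr (hposb j).le)
            (one_div_le_one_div_of_le (hpos j) (by linarith))
            (by rw [div_le_one (hpos j)]; linarith)
      _ = ENNReal.ofReal ((Real.log (1 + b) - Real.log (1 + a)) / Real.log 2) :=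
          telescope a b ha hab hb

theorem gauss_measure_digit_ge (z : ℝ) (hz : 0 < z) (n : ℕ) (hn : 1 ≤ n) :
    gaussMeasure {x | Irrational x ∧ z ≤ (cfDigit n x : ℝ)} =
      ENNReal.ofReal ((1 / Real.log 2) * Real.log (1 + 1 / (⌈z⌉₊ : ℝ))) := by
  set k := ⌈z⌉₊ with hk
  have hk1 : 1 ≤ k := Nat.one_le_iff_ne_zero.mpr (by
    intro h; rw [hk] at h; exact absurd (Nat.ceil_eq_zero.mp h) (not_le.mpr hz))
  have hkR : (1:ℝ) ≤ (k:ℝ) := by exact_mod_cast hk1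
  have hkpos : (0:ℝ) < (k:ℝ) := by linarith
  set m := n - 1 with hm
  have hmeas1 : MeasurableSet {x : ℝ | Irrational x ∧ z ≤ (cfDigit n x : ℝ)} := by
    refine measurableSet_irrational.inter ?_
    have hcf : Measurable fun x : ℝ => ((cfDigit n x : ℝ)) := by
      apply measurable_from_top.comp
      exact Nat.measurable_floor.comp (measurable_const.div (measurable_gaussMap.iterate m))
    exact hcf measurableSet_Ici
  have hseteq : {x : ℝ | Irrational x ∧ z ≤ (cfDigit n x : ℝ)} ∩ Set.Ico 0 1
      = {x | Irrational x ∧ gaussMap^[m] x ∈ Set.Ioo 0 (1/(k:ℝ))} ∩ Set.Ico 0 1 := by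
    ext x
    simp only [Set.mem_inter_iff, Set.mem_setOf_eq, and_congr_left_iff]
    intro hico
    refine and_congr_right fun hirr => ?_
    have hx1 : x ∈ Set.Ioo (0:ℝ) 1 :=
      ⟨lt_of_le_of_ne hico.1 (fun h => hirr.ne_zero h.symm), hico.2⟩
    obtain ⟨hyirr, hy⟩ := iterate_mem hirr hx1 m
    set y := gaussMap^[m] x with hy'
    have h1 : z ≤ ((cfDigit n x : ℕ) : ℝ) ↔ k ≤ cfDigit n x := (Nat.ceil_le).symm
    have h2 : cfDigit n x = ⌊1/y⌋₊ := by rw [cfDigit, hy', hm]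
    rw [h1, h2, Nat.le_floor_iff (one_div_pos.mpr hy.1).le]
    constructor
    · intro h3
      refine ⟨hy.1, ?_⟩
      have h4 : y ≤ 1/(k:ℝ) := by
        rw [le_div_iff₀ hkpos]
        rw [le_div_iff₀ hy.1] at h3
        linarith
      refine lt_of_le_of_ne h4 fun h => ?_
      exact hyirr ⟨1/(k:ℚ), by push_cast [h]; ring⟩
    · intro h3
      have := one_div_lt_one_div_of_lt hy.1 h3.2
      rw [one_div_one_div] at this
      exact this.le
  calc gaussMeasure {x : ℝ | Irrational x ∧ z ≤ (cfDigit n x : ℝ)}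
      = gaussMeasure ({x : ℝ | Irrational x ∧ z ≤ (cfDigit n x : ℝ)} ∩ Set.Ico 0 1) :=
        gaussMeasure_inter_Ico hmeas1
    _ = gaussMeasure ({x | Irrational x ∧ gaussMap^[m] x ∈ Set.Ioo 0 (1/(k:ℝ))} ∩ Set.Ico 0 1) := by
        rw [hseteq]
    _ = gaussMeasure {x | Irrational x ∧ gaussMap^[m] x ∈ Set.Ioo 0 (1/(k:ℝ))} :=
        (gaussMeasure_inter_Ico (measurableSet_T m _ _)).symm
    _ = ENNReal.ofReal ((Real.log (1 + 1/(k:ℝ)) - Real.log (1 + 0)) / Real.log 2) :=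
        key m 0 (1/(k:ℝ)) le_rfl (by positivity) (by rw [div_le_one hkpos]; linarith)
    _ = ENNReal.ofReal ((1 / Real.log 2) * Real.log (1 + 1 / (k : ℝ))) := by
        norm_num
        rw [div_eq_mul_inv, mul_comm, inv_eq_one_div]
end

section
/- For every z > 0, the Gauss measure of the set of x in [0,1) whose n-th continued fraction digit a_n(x) is strictly greater than z equals (1/log 2) · log(1 + 1/(⌊z⌋+1)). -/
open MeasureTheory Filter Set

lemma gm_ac : gaussMeasure ≪ volume :=
  (withDensity_absolutelyContinuous _ _).trans
    (Measure.absolutelyContinuous_of_le Measure.restrict_le_self)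

lemma gm_null {s : Set ℝ} (hs : volume s = 0) : gaussMeasure s = 0 := gm_ac hs

lemma gm_countable_null {s : Set ℝ} (hs : s.Countable) : gaussMeasure s = 0 :=
  gm_null (hs.measure_zero _)

lemma gm_null' {s : Set ℝ} (hs : volume (s ∩ Ico 0 1) = 0) : gaussMeasure s = 0 := by
  apply withDensity_absolutelyContinuous (volume.restrict (Ico (0:ℝ) 1)) _
  rwa [Measure.restrict_apply' measurableSet_Ico]

lemma gm_Ioo_compl : gaussMeasure (Ioo (0:ℝ) 1)ᶜ = 0 := by
  apply gm_null'
  have : (Ioo (0:ℝ) 1)ᶜ ∩ Ico 0 1 = {0} := by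
    ext x
    simp only [mem_inter_iff, mem_compl_iff, mem_Ioo, mem_Ico, mem_singleton_iff]
    constructor
    · rintro ⟨h, h0, h1⟩; by_contra hx; exact h ⟨lt_of_le_of_ne h0 (Ne.symm hx), h1⟩
    · rintro rfl; simp
  rw [this]; simp

lemma gm_inter_Ioo (s : Set ℝ) : gaussMeasure (s ∩ Ioo 0 1) = gaussMeasure s :=
  measure_inter_conull gm_Ioo_compl

lemma gm_congr {s t : Set ℝ} (h : gaussMeasure (s \ t) = 0)
    (h' : gaussMeasure (t \ s) = 0) : gaussMeasure s = gaussMeasure t :=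
  measure_congr (ae_eq_set.2 ⟨h, h'⟩)

lemma gm_Ioc {a b : ℝ} (ha : 0 ≤ a) (hab : a ≤ b) (hb : b ≤ 1) :
    gaussMeasure (Ioc a b) =
      ENNReal.ofReal (Real.log ((b + 1) / (a + 1)) / Real.log 2) := by
  rw [gaussMeasure, withDensity_apply _ measurableSet_Ioc,
    Measure.restrict_restrict measurableSet_Ioc]
  have hset : (Ioc a b ∩ Ico 0 1 : Set ℝ) =ᵐ[volume] (Ioo a b : Set ℝ) := by
    refine ae_eq_set.2 ⟨measure_mono_null ?_ (measure_singleton b), measure_mono_null ?_ (measure_empty (μ := volume))⟩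
    · intro x hx
      simp only [mem_diff, mem_inter_iff, mem_Ioc, mem_Ico, mem_Ioo, mem_singleton_iff] at *
      rcases hx with ⟨⟨⟨h1, h2⟩, _, _⟩, h5⟩
      by_contra hxb
      exact h5 ⟨h1, lt_of_le_of_ne h2 hxb⟩
    · intro x hx
      simp only [mem_diff, mem_inter_iff, mem_Ioc, mem_Ico, mem_Ioo] at hx
      rcases hx with ⟨⟨h1, h2⟩, h3⟩
      exact absurd ⟨⟨h1, h2.le⟩, le_trans ha h1.le, lt_of_lt_of_le h2 hb⟩ h3
  rw [setLIntegral_congr hset]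
  have hcont : ContinuousOn (fun x : ℝ => 1 / ((x + 1) * Real.log 2)) (Icc a b) := by
    apply ContinuousOn.div continuousOn_const
    · exact ((continuousOn_id.add continuousOn_const).mul continuousOn_const)
    · intro x hx
      have hx0 : (0:ℝ) < x + 1 := by have := hx.1; linarith
      positivity
  have hint : IntegrableOn (fun x : ℝ => 1 / ((x + 1) * Real.log 2)) (Ioo a b) volume :=
    (hcont.integrableOn_Icc).mono_set Ioo_subset_Icc_self
  have hnn : 0 ≤ᵐ[volume.restrict (Ioo a b)] fun x : ℝ => 1 / ((x + 1) * Real.log 2) := by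
    filter_upwards [ae_restrict_mem measurableSet_Ioo] with x hx
    have hx0 : (0:ℝ) < x + 1 := by have := hx.1; linarith
    have h2 : (0:ℝ) < Real.log 2 := Real.log_pos one_lt_two
    positivity
  rw [← ofReal_integral_eq_lintegral_ofReal hint hnn]
  congr 1
  rw [← integral_Ioc_eq_integral_Ioo, ← intervalIntegral.integral_of_le hab]
  have : ∀ x : ℝ, 1 / ((x + 1) * Real.log 2) = (1 / (x + 1)) / Real.log 2 := by
    intro x; rw [div_div]
  simp_rw [this]
  rw [intervalIntegral.integral_div]
  rw [show (fun x : ℝ => 1 / (x+1)) = fun x : ℝ => (fun y : ℝ => 1/y) (x + 1) from rfl]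
  rw [intervalIntegral.integral_comp_add_right (fun y : ℝ => 1/y) 1]
  rw [integral_one_div]
  intro h
  rw [Set.mem_uIcc] at h
  rcases h with ⟨h1, _⟩ | ⟨h1, _⟩ <;> linarith

noncomputable def gF (t : ℝ) (m : ℕ) : ℝ := Real.log (1 + t / (m + 1))

lemma gF_nonneg (t : ℝ) (ht0 : 0 ≤ t) (m : ℕ) : 0 ≤ gF t m := by
  apply Real.log_nonneg
  have : (0:ℝ) < (m:ℝ) + 1 := by positivity
  have : 0 ≤ t / ((m:ℝ)+1) := by positivity
  linarith

lemma gF_anti (t : ℝ) (ht0 : 0 ≤ t) (m : ℕ) : gF t (m+1) ≤ gF t m := by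
  unfold gF
  apply Real.log_le_log (by positivity)
  push_cast
  have h1 : (0:ℝ) < (m:ℝ) + 1 := by positivity
  gcongr
  · linarith

lemma gF_tendsto (t : ℝ) : Tendsto (gF t) atTop (nhds 0) := by
  have h1 : Tendsto (fun m : ℕ => t / ((m:ℝ) + 1)) atTop (nhds 0) := by
    apply Tendsto.div_atTop (tendsto_const_nhds)
    exact tendsto_atTop_add_const_right _ _ tendsto_natCast_atTop_atTop
  have h2 : Tendsto (fun m : ℕ => 1 + t / ((m:ℝ) + 1)) atTop (nhds 1) := by
    simpa using (tendsto_const_nhds (x := (1:ℝ))).add h1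
  have := (Real.continuousAt_log (one_ne_zero)).tendsto.comp h2
  rw [Real.log_one] at this
  exact this

lemma gF_hasSum (t : ℝ) (ht0 : 0 ≤ t) :
    HasSum (fun m : ℕ => gF t m - gF t (m + 1)) (Real.log (1 + t)) := by
  have hnn : ∀ m : ℕ, 0 ≤ gF t m - gF t (m+1) := fun m => by
    have := gF_anti t ht0 m; linarith
  rw [hasSum_iff_tendsto_nat_of_nonneg hnn]
  have hsum : ∀ n : ℕ, ∑ i ∈ Finset.range n, (gF t i - gF t (i+1)) = gF t 0 - gF t n :=
    fun n => Finset.sum_range_sub' (gF t) n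
  simp_rw [hsum]
  have h0 : gF t 0 = Real.log (1 + t) := by norm_num [gF]
  rw [← h0]
  simpa using (tendsto_const_nhds (x := gF t 0)).sub (gF_tendsto t)

lemma gaussMap_image_mem {x : ℝ} (hx : x ∈ Ioo (0:ℝ) 1) : gaussMap x ∈ Ico (0:ℝ) 1 := by
  have hxne : x ≠ 0 := ne_of_gt hx.1
  have h : gaussMap x = Int.fract (1/x) := by rw [gaussMap, if_neg hxne]; rfl
  rw [h]
  exact ⟨Int.fract_nonneg _, Int.fract_lt_one _⟩

lemma gaussMap_preimage (t : ℝ) (ht0 : 0 ≤ t) (ht1 : t < 1) :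
    gaussMap ⁻¹' (Iic t) ∩ Ioo 0 1 =
      (⋃ m : ℕ, Icc (1/((m:ℝ)+1+t)) (1/((m:ℝ)+1))) ∩ Ioo 0 1 := by
  ext x
  simp only [mem_inter_iff, mem_preimage, mem_Iic, mem_Ioo, mem_iUnion, mem_Icc]
  constructor
  · rintro ⟨h, hx0, hx1⟩
    refine ⟨?_, hx0, hx1⟩
    have hxne : x ≠ 0 := ne_of_gt hx0
    have hg : gaussMap x = 1/x - ⌊1/x⌋ := if_neg hxne
    have h1x : 1 < 1/x := one_lt_one_div hx0 hx1
    have hM : 1 ≤ ⌊1/x⌋ := by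
      rw [Int.le_floor]; exact_mod_cast h1x.le
    obtain ⟨m, hm⟩ : ∃ m : ℕ, (m : ℝ) + 1 = (⌊1/x⌋ : ℝ) := by
      refine ⟨(⌊1/x⌋ - 1).toNat, ?_⟩
      have h1' : ((⌊1/x⌋ - 1).toNat : ℤ) = ⌊1/x⌋ - 1 := Int.toNat_of_nonneg (by omega)
      have : (((⌊1/x⌋ - 1).toNat : ℤ) : ℝ) = ((⌊1/x⌋ : ℤ) : ℝ) - 1 := by
        rw [h1']; push_cast; ring
      push_cast at this ⊢
      linarith
    refine ⟨m, ?_, ?_⟩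
    · have hub : 1/x ≤ (⌊1/x⌋ : ℝ) + t := by
        rw [hg] at h; linarith
      have hpos : (0:ℝ) < (⌊1/x⌋ : ℝ) + t := by
        have : (1:ℝ) ≤ (⌊1/x⌋ : ℝ) := by exact_mod_cast hM
        linarith
      have h2 := one_div_le_one_div_of_le (by positivity : (0:ℝ) < 1/x) hub
      rw [one_div_one_div] at h2
      rw [show (m:ℝ) + 1 + t = (⌊1/x⌋ : ℝ) + t by rw [← hm]]
      exact h2
    · have hlb : (⌊1/x⌋ : ℝ) ≤ 1/x := Int.floor_le _
      have hpos : (0:ℝ) < (⌊1/x⌋ : ℝ) := by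
        have : (1:ℝ) ≤ (⌊1/x⌋ : ℝ) := by exact_mod_cast hM
        linarith
      have h2 := one_div_le_one_div_of_le hpos hlb
      rw [one_div_one_div] at h2
      rw [show (m:ℝ) + 1 = (⌊1/x⌋ : ℝ) from hm]
      exact h2
  · rintro ⟨⟨m, h1, h2⟩, hx0, hx1⟩
    refine ⟨?_, hx0, hx1⟩
    have hm1 : (0:ℝ) < (m:ℝ) + 1 := by positivity
    have hmt : (0:ℝ) < (m:ℝ) + 1 + t := by linarith
    have hub : ((m:ℝ) + 1) ≤ 1/x := by
      have := one_div_le_one_div_of_le hx0 h2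
      rwa [one_div_one_div] at this
    have hlb : 1/x ≤ (m:ℝ) + 1 + t := by
      have := one_div_le_one_div_of_le (by positivity) h1
      rwa [one_div_one_div] at this
    have hfl : ⌊1/x⌋ = (m:ℤ) + 1 := by
      rw [Int.floor_eq_iff]
      constructor
      · push_cast; exact hub
      · push_cast; linarith
    have hxne : x ≠ 0 := ne_of_gt hx0
    rw [gaussMap, if_neg hxne, hfl]
    push_cast
    linarith


instance gm_finite : IsFiniteMeasure gaussMeasure := by
  constructor
  rw [gaussMeasure, withDensity_apply _ MeasurableSet.univ, Measure.restrict_univ]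
  calc ∫⁻ x, ENNReal.ofReal (1 / ((x + 1) * Real.log 2)) ∂(volume.restrict (Ico (0:ℝ) 1))
      ≤ ∫⁻ _, ENNReal.ofReal (1 / Real.log 2) ∂(volume.restrict (Ico (0:ℝ) 1)) := by
        apply lintegral_mono_ae
        filter_upwards [ae_restrict_mem measurableSet_Ico] with x hx
        apply ENNReal.ofReal_le_ofReal
        have h2 : (0:ℝ) < Real.log 2 := Real.log_pos one_lt_two
        have hle : Real.log 2 ≤ (x+1) * Real.log 2 := by nlinarith [hx.1]
        exact one_div_le_one_div_of_le h2 hle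
    _ = ENNReal.ofReal (1 / Real.log 2) * volume (Ico (0:ℝ) 1) := by
        rw [lintegral_const, Measure.restrict_apply MeasurableSet.univ, univ_inter]
    _ < ⊤ := by
        rw [Real.volume_Ico]
        exact ENNReal.mul_lt_top ENNReal.ofReal_lt_top ENNReal.ofReal_lt_top

lemma gauss_invariant : gaussMeasure.map gaussMap = gaussMeasure := by
  refine Measure.ext_of_Iic _ _ (fun t => ?_)
  rw [Measure.map_apply measurable_gaussMap measurableSet_Iic]
  rcases lt_or_ge t 0 with ht | ht0
  · rw [← gm_inter_Ioo (gaussMap ⁻¹' Iic t), ← gm_inter_Ioo (Iic t)]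
    have h1 : gaussMap ⁻¹' Iic t ∩ Ioo 0 1 = ∅ := by
      ext x
      simp only [mem_inter_iff, mem_preimage, mem_Iic, mem_Ioo, mem_empty_iff_false, iff_false,
        not_and]
      intro h hx0 hx1
      exact absurd (le_trans (gaussMap_image_mem ⟨hx0, hx1⟩).1 h) (not_le.2 ht)
    have h2 : Iic t ∩ Ioo (0:ℝ) 1 = ∅ := by
      ext x
      simp only [mem_inter_iff, mem_Iic, mem_Ioo, mem_empty_iff_false, iff_false, not_and]
      intro h hx0 hx1
      linarith
    rw [h1, h2]
  rcases lt_or_ge t 1 with ht1 | ht1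
  swap
  · rw [← gm_inter_Ioo (gaussMap ⁻¹' Iic t), ← gm_inter_Ioo (Iic t)]
    have h1 : gaussMap ⁻¹' Iic t ∩ Ioo 0 1 = Ioo 0 1 :=
      inter_eq_right.2 (fun x hx => le_trans (gaussMap_image_mem hx).2.le ht1)
    have h2 : Iic t ∩ Ioo (0:ℝ) 1 = Ioo 0 1 :=
      inter_eq_right.2 (fun x hx => le_trans hx.2.le ht1)
    rw [h1, h2]
  · set c : ℕ → ℝ := fun m => 1/((m:ℝ)+1+t) with hc
    set d : ℕ → ℝ := fun m => 1/((m:ℝ)+1) with hd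
    have hc_pos : ∀ m, 0 < c m := fun m => by rw [hc]; positivity
    have hcd : ∀ m, c m ≤ d m := fun m => by
      rw [hc, hd]
      apply one_div_le_one_div_of_le (by positivity)
      linarith
    have hd1 : ∀ m, d m ≤ 1 := fun m => by
      rw [hd]
      rw [div_le_one (by positivity)]
      simp
    have hlog2 : (0:ℝ) < Real.log 2 := Real.log_pos one_lt_two
    -- LHS
    rw [← gm_inter_Ioo (gaussMap ⁻¹' Iic t), gaussMap_preimage t ht0 ht1, gm_inter_Ioo]
    have hAB : gaussMeasure (⋃ m, Icc (c m) (d m)) = gaussMeasure (⋃ m, Ioc (c m) (d m)) := by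
      apply gm_congr
      · apply measure_mono_null (t := range c) ?_ (gm_countable_null (countable_range c))
        rintro x ⟨hx1, hx2⟩
        simp only [mem_iUnion, mem_Icc, mem_Ioc, not_exists] at hx1 hx2
        obtain ⟨m, hm1, hm2⟩ := hx1
        have := hx2 m
        have hxc : x = c m := by
          by_contra hne
          exact this ⟨lt_of_le_of_ne hm1 (Ne.symm hne), hm2⟩
        exact ⟨m, hxc.symm⟩
      · apply measure_mono_null (t := (∅ : Set ℝ)) ?_ (measure_empty)
        rintro x ⟨hx1, hx2⟩
        simp only [mem_iUnion, mem_Ioc, mem_Icc, not_exists] at hx1 hx2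
        obtain ⟨m, hm1, hm2⟩ := hx1
        exact hx2 m ⟨hm1.le, hm2⟩
    rw [hAB]
    have hdisj : Pairwise (Function.onFun Disjoint fun m => Ioc (c m) (d m)) := by
      have key : ∀ p q : ℕ, p < q → d q ≤ c p := by
        intro p q hpq
        rw [hd, hc]
        apply one_div_le_one_div_of_le (by positivity)
        have : (p:ℝ) + 1 ≤ (q:ℝ) := by exact_mod_cast hpq
        linarith
      intro m n hmn
      rcases hmn.lt_or_gt with h | h
      · exact Set.Ioc_disjoint_Ioc.2 ((min_le_right _ _).trans ((key m n h).trans (le_max_left _ _)))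
      · exact Set.Ioc_disjoint_Ioc.2 ((min_le_left _ _).trans ((key n m h).trans (le_max_right _ _)))
    rw [measure_iUnion hdisj (fun m => measurableSet_Ioc)]
    have hterm : ∀ m : ℕ, gaussMeasure (Ioc (c m) (d m)) =
        ENNReal.ofReal ((gF t m - gF t (m+1)) / Real.log 2) := by
      intro m
      rw [gm_Ioc (hc_pos m).le (hcd m) (hd1 m)]
      congr 1
      have hp1 : (0:ℝ) < 1 + t/((m:ℝ)+1) := by positivity
      have hp2 : (0:ℝ) < 1 + t/((m:ℝ)+2) := by positivity
      have h1 : gF t m - gF t (m+1) =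
          Real.log ((1 + t/((m:ℝ)+1)) / (1 + t/((m:ℝ)+2))) := by
        rw [gF, gF, ← Real.log_div hp1.ne' (by push_cast; positivity)]
        push_cast
        ring_nf
      rw [h1]
      congr 2
      rw [hc, hd]
      have hm1 : ((m:ℝ)+1) ≠ 0 := by positivity
      have hmt : ((m:ℝ)+1+t) ≠ 0 := by positivity
      have hm2 : ((m:ℝ)+2) ≠ 0 := by positivity
      field_simp
      ring
    simp_rw [hterm]
    have hnn : ∀ m : ℕ, 0 ≤ (gF t m - gF t (m+1)) / Real.log 2 := fun m => by
      have := gF_anti t ht0 m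
      have h2 : 0 ≤ gF t m - gF t (m+1) := by linarith
      positivity
    have hhs : HasSum (fun m : ℕ => (gF t m - gF t (m+1)) / Real.log 2)
        (Real.log (1 + t) / Real.log 2) := (gF_hasSum t ht0).div_const _
    rw [← ENNReal.ofReal_tsum_of_nonneg hnn hhs.summable, hhs.tsum_eq]
    -- RHS
    rw [← gm_inter_Ioo (Iic t)]
    have h2 : Iic t ∩ Ioo (0:ℝ) 1 = Ioc 0 t := by
      ext x
      simp only [mem_inter_iff, mem_Iic, mem_Ioo, mem_Ioc]
      constructor
      · rintro ⟨h, hx0, _⟩; exact ⟨hx0, h⟩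
      · rintro ⟨hx0, h⟩; exact ⟨h, hx0, lt_of_le_of_lt h ht1⟩
    rw [h2, gm_Ioc le_rfl ht0 ht1.le]
    norm_num [add_comm]

lemma gauss_invariant_iterate (m : ℕ) : gaussMeasure.map (gaussMap^[m]) = gaussMeasure := by
  induction m with
  | zero => simp
  | succ k ih =>
      rw [Function.iterate_succ', ← Measure.map_map measurable_gaussMap
        (measurable_gaussMap.iterate k), ih, gauss_invariant]


theorem gauss_measure_digit_gt (z : ℝ) (hz : 0 < z) (n : ℕ) (hn : 1 ≤ n) :
    gaussMeasure {x | Irrational x ∧ z < (cfDigit n x : ℝ)} =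
      ENNReal.ofReal ((1 / Real.log 2) * Real.log (1 + 1 / ((⌊z⌋₊ : ℝ) + 1))) := by
  set k := ⌊z⌋₊ with hk
  have hk1 : (0:ℝ) < (k:ℝ) + 1 := by positivity
  set B : Set ℝ := {y | z < (⌊1/y⌋₊ : ℝ)} with hB
  have hBmeas : MeasurableSet B := by
    apply measurableSet_lt measurable_const
    exact measurable_from_top.comp (Nat.measurable_floor.comp (measurable_const.div measurable_id))
  have hS : {x | Irrational x ∧ z < (cfDigit n x : ℝ)} =
      (gaussMap^[n-1]) ⁻¹' B ∩ {x | Irrational x} := by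
    ext x
    simp only [mem_setOf_eq, mem_inter_iff, mem_preimage, hB, mem_setOf_eq, cfDigit]
    tauto
  rw [hS, measure_inter_conull ?hc]
  case hc =>
    apply gm_countable_null
    have hcompl : {x : ℝ | Irrational x}ᶜ = Set.range ((↑) : ℚ → ℝ) := by
      ext x; simp [Irrational, not_not]
    rw [hcompl]
    exact countable_range _
  rw [← Measure.map_apply (measurable_gaussMap.iterate (n-1)) hBmeas, gauss_invariant_iterate]
  rw [← gm_inter_Ioo B]
  have hBI : B ∩ Ioo 0 1 = Ioc 0 (1/((k:ℝ)+1)) ∩ Ioo 0 1 := by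
    ext y
    simp only [hB, mem_inter_iff, mem_setOf_eq, mem_Ioo, mem_Ioc]
    constructor
    · rintro ⟨h, hy0, hy1⟩
      refine ⟨⟨hy0, ?_⟩, hy0, hy1⟩
      have h1 : k < ⌊1/y⌋₊ := (Nat.floor_lt hz.le).2 h
      have h2 : ((k:ℝ)+1) ≤ (⌊1/y⌋₊ : ℝ) := by exact_mod_cast h1
      have h3 : (⌊1/y⌋₊ : ℝ) ≤ 1/y := Nat.floor_le (by positivity)
      have h4 := one_div_le_one_div_of_le hk1 (le_trans h2 h3)
      rwa [one_div_one_div] at h4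
    · rintro ⟨⟨hy0, hys⟩, _, hy1⟩
      refine ⟨?_, hy0, hy1⟩
      have h2 := one_div_le_one_div_of_le hy0 hys
      rw [one_div_one_div] at h2
      have h3 : k + 1 ≤ ⌊1/y⌋₊ := Nat.le_floor (by push_cast; exact h2)
      have h4 : ((k:ℝ)) + 1 ≤ (⌊1/y⌋₊ : ℝ) := by exact_mod_cast h3
      have h5 : z < (k:ℝ) + 1 := Nat.lt_floor_add_one z
      linarith
  rw [hBI, gm_inter_Ioo, gm_Ioc le_rfl (by positivity) (by
    rw [div_le_one (by positivity)]; linarith)]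
  congr 1
  rw [show ((1/((k:ℝ)+1)+1)/(0+1)) = 1 + 1/((k:ℝ)+1) by ring]
  rw [one_div_mul_eq_div]
end

section
/- Borel–Bernstein Theorem (divergence direction): if (b_n) is a sequence of positive reals with Σ_n 1/b_n = ∞, then for Lebesgue-almost every x in [0,1), the inequality a_n(x) ≥ b_n holds for infinitely many n. -/
open MeasureTheory Filter Set

namespace BB

def G : Set ℝ := {x | x ∈ Set.Ioo (0:ℝ) 1 ∧ Irrational x}

lemma G_pos {x : ℝ} (hx : x ∈ G) : 0 < x := hx.1.1
lemma G_lt_one {x : ℝ} (hx : x ∈ G) : x < 1 := hx.1.2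
lemma G_irr {x : ℝ} (hx : x ∈ G) : Irrational x := hx.2

lemma G_one_lt_inv {x : ℝ} (hx : x ∈ G) : 1 < 1 / x := by
  rw [lt_div_iff₀ (G_pos hx)]; simpa using (G_lt_one hx)

lemma gaussMap_eq {x : ℝ} (hx : x ≠ 0) : gaussMap x = Int.fract (1/x) := by
  rw [gaussMap, if_neg hx, Int.fract]

lemma G_gauss {x : ℝ} (hx : x ∈ G) : gaussMap x ∈ G := by
  have hx0 : x ≠ 0 := (G_pos hx).ne'
  have hirr : Irrational (1/x) := by
    rw [one_div]; exact (G_irr hx).inv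
  have hfr : Irrational (Int.fract (1/x)) := by
    rw [Int.fract]; exact hirr.sub_intCast ⌊1/x⌋
  refine ⟨⟨?_, ?_⟩, ?_⟩
  · rw [gaussMap_eq hx0]
    exact lt_of_le_of_ne (Int.fract_nonneg (1/x)) (Ne.symm hfr.ne_zero)
  · rw [gaussMap_eq hx0]; exact Int.fract_lt_one _
  · rw [gaussMap_eq hx0]; exact hfr

lemma G_iter {x : ℝ} (hx : x ∈ G) (n : ℕ) : gaussMap^[n] x ∈ G := by
  induction n with
  | zero => simpa using hx
  | succ n ih => rw [Function.iterate_succ_apply']; exact G_gauss ih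

noncomputable def Dg (i : ℕ) (x : ℝ) : ℕ := ⌊1 / (gaussMap^[i] x)⌋₊

lemma Dg_succ (i : ℕ) (x : ℝ) : Dg (i+1) x = Dg i (gaussMap x) := by
  simp [Dg, Function.iterate_succ_apply]

lemma Dg_zero (x : ℝ) : Dg 0 x = ⌊1/x⌋₊ := by simp [Dg]

lemma G_D_ge_one {x : ℝ} (hx : x ∈ G) : 1 ≤ ⌊1/x⌋₊ :=
  Nat.le_floor (by exact_mod_cast (G_one_lt_inv hx).le)

lemma x_eq {x : ℝ} (hx : x ∈ G) : x = 1 / ((⌊1/x⌋₊ : ℝ) + gaussMap x) := by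
  have hxp := G_pos hx
  have hx0 : x ≠ 0 := hxp.ne'
  have h1 : ((⌊1/x⌋₊ : ℝ)) = ((⌊1/x⌋ : ℤ) : ℝ) := by
    exact_mod_cast natCast_floor_eq_intCast_floor (by positivity : (0:ℝ) ≤ 1/x)
  rw [gaussMap, if_neg hx0, h1,
    show ((⌊1/x⌋:ℤ):ℝ) + (1/x - ⌊1/x⌋) = 1/x by ring, one_div_one_div]

lemma phi_G {j : ℕ} (hj : 1 ≤ j) {t : ℝ} (ht : t ∈ G) :
    1/((j:ℝ)+t) ∈ G ∧ gaussMap (1/((j:ℝ)+t)) = t ∧ Dg 0 (1/((j:ℝ)+t)) = j := by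
  have htpos := G_pos ht
  have ht1 := G_lt_one ht
  have hj1 : (1:ℝ) ≤ (j:ℝ) := by exact_mod_cast hj
  have hspos : (0:ℝ) < (j:ℝ) + t := by linarith
  have hinv : 1 / (1/((j:ℝ)+t)) = (j:ℝ) + t := one_div_one_div _
  have hmemG : 1/((j:ℝ)+t) ∈ G := by
    refine ⟨⟨by positivity, ?_⟩, ?_⟩
    · rw [div_lt_one hspos]; linarith
    · have : Irrational ((j:ℝ) + t) := (G_irr ht).natCast_add j
      rw [one_div]; exact this.inv
  have hx0 : 1/((j:ℝ)+t) ≠ 0 := (G_pos hmemG).ne'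
  have hfl : ⌊(j:ℝ) + t⌋ = (j:ℤ) := by
    rw [add_comm, show ((j:ℝ)) = ((j:ℤ):ℝ) by push_cast; ring, Int.floor_add_intCast,
      Int.floor_eq_zero_iff.mpr ⟨htpos.le, ht1⟩]
    ring
  refine ⟨hmemG, ?_, ?_⟩
  · rw [gaussMap, if_neg hx0, hinv, hfl]; push_cast; ring
  · rw [Dg_zero, hinv]
    have h2 : ((⌊(j:ℝ)+t⌋₊ : ℤ)) = ⌊(j:ℝ)+t⌋ := Int.natCast_floor_eq_floor (by positivity)
    rw [hfl] at h2; exact_mod_cast h2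


noncomputable def psi : List ℕ → ℝ → ℝ
  | [] => id
  | j :: w => fun t => 1 / ((j:ℝ) + psi w t)

@[simp] lemma psi_nil (t : ℝ) : psi [] t = t := rfl
@[simp] lemma psi_cons (j : ℕ) (w : List ℕ) (t : ℝ) :
    psi (j :: w) t = 1 / ((j:ℝ) + psi w t) := rfl

def cfA : List ℕ → ℕ × ℕ × ℕ × ℕ
  | [] => (1, 0, 0, 1)
  | j :: w =>
    let p := cfA w
    (p.2.2.1, p.2.2.2, j * p.2.2.1 + p.1, j * p.2.2.2 + p.2.1)

lemma psi_nonneg (w : List ℕ) {t : ℝ} (ht : 0 ≤ t) : 0 ≤ psi w t := by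
  induction w with
  | nil => exact ht
  | cons j w ih =>
    have h : (0:ℝ) ≤ (j:ℝ) + psi w t := add_nonneg (by positivity) ih
    rw [psi_cons]; exact one_div_nonneg.mpr h

lemma cfA_spec (w : List ℕ) (hw : ∀ j ∈ w, 1 ≤ j) :
    1 ≤ (cfA w).2.2.2 ∧
    (((cfA w).1 : ℤ) * (cfA w).2.2.2 - (cfA w).2.1 * (cfA w).2.2.1 = 1 ∨
     ((cfA w).1 : ℤ) * (cfA w).2.2.2 - (cfA w).2.1 * (cfA w).2.2.1 = -1) ∧
    ∀ t : ℝ, 0 ≤ t → psi w t =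
      ((cfA w).1 * t + (cfA w).2.1) / ((cfA w).2.2.1 * t + (cfA w).2.2.2) := by
  induction w with
  | nil =>
    refine ⟨le_refl _, Or.inl (by norm_num [cfA]), fun t ht => by simp [cfA]⟩
  | cons j w ih =>
    obtain ⟨hd, hdet, hform⟩ := ih (fun i hi => hw i (List.mem_cons_of_mem j hi))
    have hj : 1 ≤ j := hw j List.mem_cons_self
    rcases hq : cfA w with ⟨a, b, c, d⟩
    rw [hq] at hd hdet hform
    have hcA : cfA (j :: w) = (c, d, j * c + a, j * d + b) := by
      rw [cfA, hq]
    rw [hcA]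
    simp only at hd hdet hform ⊢
    have hj1 : (1:ℝ) ≤ (j:ℝ) := by exact_mod_cast hj
    refine ⟨by nlinarith [hj, hd], ?_, ?_⟩
    · rcases hdet with h | h
      · right; push_cast; ring_nf; ring_nf at h; linarith
      · left; push_cast; ring_nf; ring_nf at h; linarith
    · intro t ht
      have hd1 : (1:ℝ) ≤ (d:ℝ) := by exact_mod_cast hd
      have h1 : (0:ℝ) < (c:ℝ)*t + d := by positivity
      have h2 : (0:ℝ) ≤ (a:ℝ)*t + b := by positivity
      have h3 : (0:ℝ) < ((j:ℝ)*c + a)*t + ((j:ℝ)*d + b) := by nlinarith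
      rw [psi_cons, hform t ht]
      push_cast
      rw [add_div' _ _ _ h1.ne', one_div_div]
      rw [div_eq_div_iff (by nlinarith) h3.ne']
      ring

noncomputable def cC (w : List ℕ) : ℝ := ((cfA w).2.2.1 : ℝ)
noncomputable def cD (w : List ℕ) : ℝ := ((cfA w).2.2.2 : ℝ)
noncomputable def lenW (w : List ℕ) : ℝ := 1 / ((cC w + cD w) * cD w)

lemma psi_master (w : List ℕ) (hw : ∀ j ∈ w, 1 ≤ j) :
    1 ≤ cD w ∧ 0 ≤ cC w ∧
    (∀ s t : ℝ, 0 ≤ s → 0 ≤ t →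
      |psi w s - psi w t| = |s - t| / ((cC w * s + cD w) * (cC w * t + cD w))) ∧
    (∀ u t v : ℝ, 0 ≤ u → u ≤ t → t ≤ v →
      psi w t ∈ Icc (min (psi w u) (psi w v)) (max (psi w u) (psi w v))) := by
  obtain ⟨hd, hdet, hform⟩ := cfA_spec w hw
  set a := (cfA w).1
  set b := (cfA w).2.1
  set c := (cfA w).2.2.1
  set d := (cfA w).2.2.2
  have hd1 : (1:ℝ) ≤ cD w := by rw [cD]; exact_mod_cast hd
  have hc0 : (0:ℝ) ≤ cC w := by rw [cC]; positivity
  set e : ℝ := (a:ℝ) * d - (b:ℝ) * c with he_def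
  have he : e = 1 ∨ e = -1 := by
    rcases hdet with h | h
    · left; rw [he_def]; exact_mod_cast h
    · right; rw [he_def]; push_cast; exact_mod_cast h
  have hQ : ∀ t : ℝ, 0 ≤ t → 0 < cC w * t + cD w := by
    intro t ht
    have : 0 ≤ cC w * t := mul_nonneg hc0 ht
    linarith
  have hsub : ∀ s t : ℝ, 0 ≤ s → 0 ≤ t →
      psi w s - psi w t = (s - t) * e / ((cC w * s + cD w) * (cC w * t + cD w)) := by
    intro s t hs ht
    rw [hform s hs, hform t ht]
    have h1 := (hQ s hs).ne'
    have h2 := (hQ t ht).ne'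
    rw [cC, cD] at h1 h2 ⊢
    rw [div_sub_div _ _ h1 h2, he_def]
    ring
  refine ⟨hd1, hc0, ?_, ?_⟩
  · intro s t hs ht
    rw [hsub s t hs ht, abs_div, abs_mul]
    have h1 : |e| = 1 := by rcases he with h | h <;> simp [h]
    rw [h1, mul_one, abs_of_pos (mul_pos (hQ s hs) (hQ t ht))]
  · intro u t v hu hut htv
    have ht0 : 0 ≤ t := hu.trans hut
    have hv0 : 0 ≤ v := ht0.trans htv
    have h1 := hsub t u ht0 hu
    have h2 := hsub v t hv0 ht0
    have p1 : 0 < (cC w * t + cD w) * (cC w * u + cD w) := mul_pos (hQ t ht0) (hQ u hu)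
    have p2 : 0 < (cC w * v + cD w) * (cC w * t + cD w) := mul_pos (hQ v hv0) (hQ t ht0)
    rcases he with h | h
    · have d1 : 0 ≤ psi w t - psi w u := by
        rw [h1, h, mul_one]; exact div_nonneg (by linarith) p1.le
      have d2 : 0 ≤ psi w v - psi w t := by
        rw [h2, h, mul_one]; exact div_nonneg (by linarith) p2.le
      constructor
      · exact le_trans (min_le_left _ _) (by linarith)
      · exact le_trans (by linarith) (le_max_right _ _)
    · have d1 : 0 ≤ psi w u - psi w t := by
        rw [show psi w u - psi w t = -(psi w t - psi w u) by ring, h1, h]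
        rw [show -((t - u) * (-1) / ((cC w * t + cD w) * (cC w * u + cD w)))
            = (t - u) / ((cC w * t + cD w) * (cC w * u + cD w)) by ring]
        exact div_nonneg (by linarith) p1.le
      have d2 : 0 ≤ psi w t - psi w v := by
        rw [show psi w t - psi w v = -(psi w v - psi w t) by ring, h2, h]
        rw [show -((v - t) * (-1) / ((cC w * v + cD w) * (cC w * t + cD w)))
            = (v - t) / ((cC w * v + cD w) * (cC w * t + cD w)) by ring]
        exact div_nonneg (by linarith) p2.le
      constructor
      · exact le_trans (min_le_right _ _) (by linarith)
      · exact le_trans (by linarith) (le_max_left _ _)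

lemma psi_contOn (w : List ℕ) (hw : ∀ j ∈ w, 1 ≤ j) :
    ContinuousOn (psi w) (Icc (0:ℝ) 1) := by
  induction w with
  | nil => exact continuousOn_id
  | cons j w ih =>
    have hj : 1 ≤ j := hw j List.mem_cons_self
    have ih' := ih (fun i hi => hw i (List.mem_cons_of_mem j hi))
    have : ContinuousOn (fun t => 1 / ((j:ℝ) + psi w t)) (Icc (0:ℝ) 1) := by
      apply ContinuousOn.div continuousOn_const (continuousOn_const.add ih')
      intro t ht
      have h0 : 0 ≤ psi w t := psi_nonneg w ht.1
      have hj1 : (1:ℝ) ≤ (j:ℝ) := by exact_mod_cast hj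
      exact ne_of_gt (show (0:ℝ) < (j:ℝ) + psi w t by linarith)
    exact this

lemma psi_not_irrational (w : List ℕ) (hw : ∀ j ∈ w, 1 ≤ j) {t : ℝ} (ht : 0 ≤ t)
    (hrat : ¬ Irrational t) : ¬ Irrational (psi w t) := by
  obtain ⟨hd, _, hform⟩ := cfA_spec w hw
  rw [Irrational, not_not] at hrat ⊢
  obtain ⟨r, hr⟩ := hrat
  set a := (cfA w).1
  set b := (cfA w).2.1
  set c := (cfA w).2.2.1
  set d := (cfA w).2.2.2
  refine ⟨((a:ℚ) * r + b) / ((c:ℚ) * r + d), ?_⟩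
  rw [hform t ht, ← hr]
  push_cast
  ring


lemma psi_image_spec (w : List ℕ) (hw : ∀ j ∈ w, 1 ≤ j) {t : ℝ} (ht : t ∈ G) :
    psi w t ∈ G ∧ gaussMap^[w.length] (psi w t) = t ∧
      ∀ i < w.length, Dg i (psi w t) = w.getD i 0 := by
  induction w with
  | nil => refine ⟨ht, by simp, by simp⟩
  | cons j w ih =>
    obtain ⟨hG, hit, hdig⟩ := ih (fun i hi => hw i (List.mem_cons_of_mem j hi))
    have hj : 1 ≤ j := hw j List.mem_cons_self
    obtain ⟨hmem, hgauss, hD0⟩ := phi_G hj hG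
    simp only [psi_cons]
    refine ⟨hmem, ?_, ?_⟩
    · rw [List.length_cons, Function.iterate_succ_apply, hgauss, hit]
    · intro i hi
      match i with
      | 0 => simpa using hD0
      | (k+1) =>
        rw [Dg_succ, hgauss]
        have hk : k < w.length := by simpa using hi
        simpa using hdig k hk

lemma exists_word (n : ℕ) : ∀ x, x ∈ G → ∃ w : List ℕ, w.length = n ∧ (∀ j ∈ w, 1 ≤ j) ∧
    (∀ i < n, w.getD i 0 = Dg i x) ∧ x = psi w (gaussMap^[n] x) := by
  induction n with
  | zero => exact fun x hx => ⟨[], rfl, by simp, by simp, by simp⟩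
  | succ n ih =>
    intro x hx
    obtain ⟨w, hlen, hge, hdig, heq⟩ := ih (gaussMap x) (G_gauss hx)
    refine ⟨⌊1/x⌋₊ :: w, by simp [hlen], ?_, ?_, ?_⟩
    · intro j hj
      rcases List.mem_cons.mp hj with h | h
      · exact h ▸ G_D_ge_one hx
      · exact hge j h
    · intro i hi
      match i with
      | 0 => simp [Dg_zero]
      | (k+1) =>
        have hk : k < n := by omega
        rw [Dg_succ]
        simpa using hdig k hk
    · rw [psi_cons, Function.iterate_succ_apply, ← heq]
      exact x_eq hx

def cyl (w : List ℕ) : Set ℝ := {x | x ∈ G ∧ ∀ i < w.length, Dg i x = w.getD i 0}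

lemma cyl_eq_image (w : List ℕ) (hw : ∀ j ∈ w, 1 ≤ j) (S : Set ℝ) :
    psi w '' (G ∩ S) = cyl w ∩ {x | gaussMap^[w.length] x ∈ S} := by
  ext x
  constructor
  · rintro ⟨t, ⟨htG, htS⟩, rfl⟩
    obtain ⟨h1, h2, h3⟩ := psi_image_spec w hw htG
    exact ⟨⟨h1, h3⟩, by simp only [mem_setOf_eq, h2]; exact htS⟩
  · rintro ⟨⟨hxG, hdig⟩, hS⟩
    obtain ⟨w', hlen, hge, hdig', heq⟩ := exists_word w.length x hxG
    have hww : w' = w := by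
      apply List.ext_getElem (by rw [hlen])
      intro i h1 h2
      rw [← List.getD_eq_getElem w' 0 h1, ← List.getD_eq_getElem w 0 h2,
        hdig' i (by omega), hdig i h2]
    refine ⟨gaussMap^[w.length] x, ⟨G_iter hxG _, hS⟩, ?_⟩
    rw [hww] at heq
    exact heq.symm

lemma cyl_disjoint {w w' : List ℕ} (hlen : w.length = w'.length) (hne : w ≠ w') :
    Disjoint (cyl w) (cyl w') := by
  rw [Set.disjoint_left]
  rintro x ⟨hxG, h1⟩ ⟨_, h2⟩
  apply hne
  apply List.ext_getElem hlen
  intro i hi hi'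
  rw [← List.getD_eq_getElem w 0 hi, ← List.getD_eq_getElem w' 0 hi',
    ← h1 i hi, ← h2 i hi']


lemma cyl_eq_image' (w : List ℕ) (hw : ∀ j ∈ w, 1 ≤ j) : cyl w = psi w '' G := by
  have h := cyl_eq_image w hw univ
  simpa using h.symm

lemma abs_diff_eq (w : List ℕ) (hw : ∀ j ∈ w, 1 ≤ j) :
    |psi w 1 - psi w 0| = lenW w := by
  obtain ⟨hd1, hc0, habs, _⟩ := psi_master w hw
  rw [habs 1 0 zero_le_one le_rfl, lenW]
  rw [show |(1:ℝ) - 0| = 1 by norm_num]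
  rw [show (cC w * 1 + cD w) * (cC w * 0 + cD w) = (cC w + cD w) * cD w by ring]

lemma lenW_pos (w : List ℕ) (hw : ∀ j ∈ w, 1 ≤ j) : 0 < lenW w := by
  obtain ⟨hd1, hc0, _, _⟩ := psi_master w hw
  rw [lenW]
  have h : 0 < (cC w + cD w) * cD w := by nlinarith
  positivity

lemma vol_lower (w : List ℕ) (hw : ∀ j ∈ w, 1 ≤ j) :
    ENNReal.ofReal (lenW w) ≤ volume (cyl w) := by
  set p := psi w 0 with hp
  set q := psi w 1 with hq
  set R : Set ℝ := Set.range ((↑) : ℚ → ℝ) with hR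
  have hRn : volume R = 0 := (Set.countable_range _).measure_zero _
  have hM : (Ioo p q ∪ Ioo q p) \ R ⊆ psi w '' G := by
    rintro y ⟨hy, hyR⟩
    have hyirr : Irrational y := hyR
    have hcont := psi_contOn w hw
    have hy' : y ∈ psi w '' (Ioo (0:ℝ) 1) := by
      rcases hy with h | h
      · exact intermediate_value_Ioo zero_le_one hcont h
      · exact intermediate_value_Ioo' zero_le_one hcont h
    obtain ⟨t, htI, rfl⟩ := hy'
    have htirr : Irrational t := by
      by_contra hc
      exact (psi_not_irrational w hw htI.1.le hc) hyirr
    exact ⟨t, ⟨htI, htirr⟩, rfl⟩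
  have h1 : volume ((Ioo p q ∪ Ioo q p) \ R) = volume (Ioo p q ∪ Ioo q p) :=
    measure_diff_null hRn
  have h2 : volume (Ioo p q ∪ Ioo q p) = ENNReal.ofReal (lenW w) := by
    rcases le_or_gt p q with h | h
    · rw [Set.Ioo_eq_empty (by simpa using h : ¬ q < p), Set.union_empty, Real.volume_Ioo]
      rw [← abs_diff_eq w hw, abs_of_nonneg (sub_nonneg.mpr h)]
    · rw [Set.Ioo_eq_empty (by simpa using h.le : ¬ p < q), Set.empty_union, Real.volume_Ioo]
      rw [← abs_diff_eq w hw, abs_of_nonpos (sub_nonpos.mpr h.le)]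
      ring_nf
  calc ENNReal.ofReal (lenW w) = volume ((Ioo p q ∪ Ioo q p) \ R) := by rw [h1, h2]
    _ ≤ volume (psi w '' G) := measure_mono hM
    _ = volume (cyl w) := by rw [cyl_eq_image' w hw]

lemma cyl_subset_Icc (w : List ℕ) (hw : ∀ j ∈ w, 1 ≤ j) :
    cyl w ⊆ Icc (min (psi w 0) (psi w 1)) (max (psi w 0) (psi w 1)) := by
  obtain ⟨_, _, _, hmono⟩ := psi_master w hw
  rw [cyl_eq_image' w hw]
  rintro _ ⟨t, htG, rfl⟩
  exact hmono 0 t 1 le_rfl (G_pos htG).le (G_lt_one htG).le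

lemma cyl_nullMeasurable (w : List ℕ) (hw : ∀ j ∈ w, 1 ≤ j) :
    NullMeasurableSet (cyl w) volume := by
  set p := psi w 0 with hp
  set q := psi w 1 with hq
  set R : Set ℝ := Set.range ((↑) : ℚ → ℝ) with hR
  set M : Set ℝ := (Ioo p q ∪ Ioo q p) \ R with hMdef
  have hMmeas : MeasurableSet M :=
    (measurableSet_Ioo.union measurableSet_Ioo).diff (Set.countable_range _).measurableSet
  have hMsub : M ⊆ cyl w := by
    rw [cyl_eq_image' w hw]
    exact fun y hy => by
      have := vol_lower w hw
      -- reuse the inclusion proof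
      exact (by
        rintro y ⟨hy, hyR⟩
        have hyirr : Irrational y := hyR
        have hy' : y ∈ psi w '' (Ioo (0:ℝ) 1) := by
          rcases hy with h | h
          · exact intermediate_value_Ioo zero_le_one (psi_contOn w hw) h
          · exact intermediate_value_Ioo' zero_le_one (psi_contOn w hw) h
        obtain ⟨t, htI, rfl⟩ := hy'
        have htirr : Irrational t := by
          by_contra hc
          exact (psi_not_irrational w hw htI.1.le hc) hyirr
        exact ⟨t, ⟨htI, htirr⟩, rfl⟩ : M ⊆ psi w '' G) hy
  have hnull : volume (cyl w \ M) = 0 := by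
    have hsub : cyl w \ M ⊆ ({p, q} : Set ℝ) ∪ R := by
      rintro x ⟨hx, hxM⟩
      by_cases hxR : x ∈ R
      · exact Or.inr hxR
      · left
        have hxU : x ∉ Ioo p q ∪ Ioo q p := fun hU => hxM ⟨hU, hxR⟩
        have hIcc := cyl_subset_Icc w hw hx
        rcases le_total p q with h | h
        · rw [min_eq_left h, max_eq_right h] at hIcc
          rcases eq_or_lt_of_le hIcc.1 with h1 | h1
          · exact Or.inl h1.symm
          rcases eq_or_lt_of_le hIcc.2 with h2 | h2
          · exact Or.inr h2
          exact absurd (Or.inl ⟨h1, h2⟩) hxU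
        · rw [min_eq_right h, max_eq_left h] at hIcc
          rcases eq_or_lt_of_le hIcc.1 with h1 | h1
          · exact Or.inr h1.symm
          rcases eq_or_lt_of_le hIcc.2 with h2 | h2
          · exact Or.inl h2
          exact absurd (Or.inr ⟨h1, h2⟩) hxU
    refine measure_mono_null hsub ?_
    refine measure_union_null ?_ ((Set.countable_range _).measure_zero _)
    exact ((Set.countable_singleton q).insert p).measure_zero _
  have : cyl w = M ∪ (cyl w \ M) := (Set.union_diff_cancel hMsub).symm
  rw [this]
  exact hMmeas.nullMeasurableSet.union (NullMeasurableSet.of_null hnull)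

lemma vol_inter_upper (w : List ℕ) (hw : ∀ j ∈ w, 1 ≤ j) {u : ℝ} (hu0 : 0 ≤ u) (hu1 : u ≤ 1) :
    volume (cyl w ∩ {x | gaussMap^[w.length] x ∈ Ioi u}) ≤
      ENNReal.ofReal ((1 - u) * lenW w) := by
  obtain ⟨hd1, hc0, habs, hmono⟩ := psi_master w hw
  rw [← cyl_eq_image w hw (Ioi u)]
  have hsub : psi w '' (G ∩ Ioi u) ⊆
      Icc (min (psi w u) (psi w 1)) (max (psi w u) (psi w 1)) := by
    rintro _ ⟨t, ⟨htG, htu⟩, rfl⟩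
    exact hmono u t 1 hu0 (le_of_lt htu) (G_lt_one htG).le
  calc volume (psi w '' (G ∩ Ioi u))
      ≤ volume (Icc (min (psi w u) (psi w 1)) (max (psi w u) (psi w 1))) := measure_mono hsub
    _ = ENNReal.ofReal (max (psi w u) (psi w 1) - min (psi w u) (psi w 1)) := Real.volume_Icc
    _ = ENNReal.ofReal (|psi w 1 - psi w u|) := by rw [max_sub_min_eq_abs, abs_sub_comm]
    _ ≤ ENNReal.ofReal ((1 - u) * lenW w) := by
        apply ENNReal.ofReal_le_ofReal
        rw [habs 1 u zero_le_one hu0, abs_of_nonneg (by linarith : (0:ℝ) ≤ 1 - u)]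
        have hq1 : (0:ℝ) < cC w * u + cD w := by nlinarith
        have hq2 : (0:ℝ) < (cC w * 1 + cD w) := by nlinarith
        have hkey : (cC w + cD w) * cD w ≤ (cC w * 1 + cD w) * (cC w * u + cD w) := by
          nlinarith [mul_nonneg (mul_nonneg (add_nonneg hc0 (by linarith : (0:ℝ) ≤ cD w)) hc0) hu0]
        rw [lenW, show (1 - u) * (1 / ((cC w + cD w) * cD w))
            = (1 - u) / ((cC w + cD w) * cD w) by ring]
        exact div_le_div_of_nonneg_left (by linarith) (by nlinarith) hkey


def Words (m : ℕ → ℕ) (N n : ℕ) : Set (List ℕ) :=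
  {w | w.length = N + n ∧ (∀ j ∈ w, 1 ≤ j) ∧ ∀ i, N ≤ i → i < N + n → w.getD i 0 < m i}

def Bad (m : ℕ → ℕ) (N n : ℕ) : Set ℝ :=
  {x | x ∈ G ∧ ∀ i, N ≤ i → i < N + n → Dg i x < m i}

lemma bad_eq (m : ℕ → ℕ) (N n : ℕ) : Bad m N n = ⋃ w ∈ Words m N n, cyl w := by
  ext x
  simp only [mem_iUnion, exists_prop]
  constructor
  · rintro ⟨hxG, hbad⟩
    obtain ⟨w, hlen, hge, hdig, -⟩ := exists_word (N+n) x hxG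
    refine ⟨w, ⟨hlen, hge, fun i hNi hin => ?_⟩, ⟨hxG, fun i hi => (hdig i (by omega)).symm⟩⟩
    rw [hdig i (by omega)]
    exact hbad i hNi hin
  · rintro ⟨w, ⟨hlen, hge, hcon⟩, hxG, hdig⟩
    exact ⟨hxG, fun i hNi hin => by rw [hdig i (by omega)]; exact hcon i hNi hin⟩

lemma bad_vol (m : ℕ → ℕ) (hm : ∀ i, 1 ≤ m i) (N : ℕ) : ∀ n,
    volume (Bad m N n) ≤
      ENNReal.ofReal (∏ i ∈ Finset.Ico N (N+n), (1 - 1/(m i : ℝ))) := by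
  intro n
  induction n with
  | zero =>
    simp only [Nat.add_zero, Finset.Ico_self, Finset.prod_empty, ENNReal.ofReal_one]
    calc volume (Bad m N 0) ≤ volume (Ioo (0:ℝ) 1) := measure_mono (fun x hx => hx.1.1)
      _ = 1 := by rw [Real.volume_Ioo]; norm_num
  | succ n ih =>
    set u : ℝ := 1 / (m (N+n) : ℝ) with hu
    have hm' : 1 ≤ m (N+n) := hm _
    have hmr : (1:ℝ) ≤ (m (N+n) : ℝ) := by exact_mod_cast hm'
    have hu0 : 0 ≤ u := by positivity
    have hu1 : u ≤ 1 := by rw [hu, div_le_one (by linarith)]; linarith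
    have hWc : (Words m N n).Countable := Set.to_countable _
    have hkey : Bad m N (n+1) ⊆
        ⋃ w ∈ Words m N n, (cyl w ∩ {x | gaussMap^[N+n] x ∈ Ioi u}) := by
      rintro x ⟨hxG, hball⟩
      have hxBn : x ∈ Bad m N n := ⟨hxG, fun i h1 h2 => hball i h1 (by omega)⟩
      rw [bad_eq] at hxBn
      simp only [mem_iUnion, exists_prop] at hxBn ⊢
      obtain ⟨w, hwW, hxw⟩ := hxBn
      refine ⟨w, hwW, hxw, ?_⟩
      have hD : Dg (N+n) x < m (N+n) := hball (N+n) (by omega) (by omega)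
      have hTG : gaussMap^[N+n] x ∈ G := G_iter hxG _
      have hTpos := G_pos hTG
      have hfl : 1 / (gaussMap^[N+n] x) < (m (N+n) : ℝ) :=
        (Nat.floor_lt (by positivity)).mp hD
      have h2 : 1 < (m (N+n) : ℝ) * gaussMap^[N+n] x := by
        rw [div_lt_iff₀ hTpos] at hfl
        linarith [hfl]
      show gaussMap^[N+n] x ∈ Ioi u
      rw [mem_Ioi, hu, div_lt_iff₀ (by linarith : (0:ℝ) < (m (N+n):ℝ))]
      linarith [h2]
    calc volume (Bad m N (n+1))
        ≤ volume (⋃ w ∈ Words m N n, (cyl w ∩ {x | gaussMap^[N+n] x ∈ Ioi u})) :=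
          measure_mono hkey
      _ ≤ ∑' w : Words m N n, volume (cyl w ∩ {x | gaussMap^[N+n] x ∈ Ioi u}) :=
          measure_biUnion_le volume hWc _
      _ ≤ ∑' w : Words m N n, ENNReal.ofReal (1 - u) * volume (cyl (w:List ℕ)) := by
          apply ENNReal.tsum_le_tsum
          rintro ⟨w, hwW⟩
          have hlen : w.length = N + n := hwW.1
          have hge := hwW.2.1
          have h1 : volume (cyl w ∩ {x | gaussMap^[N+n] x ∈ Ioi u}) ≤
              ENNReal.ofReal ((1-u) * lenW w) := by
            rw [← hlen]
            exact vol_inter_upper w hge hu0 hu1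
          refine h1.trans ?_
          rw [ENNReal.ofReal_mul (by linarith)]
          exact mul_le_mul_right (vol_lower w hge) _
      _ = ENNReal.ofReal (1 - u) * ∑' w : Words m N n, volume (cyl (w:List ℕ)) :=
          ENNReal.tsum_mul_left
      _ = ENNReal.ofReal (1 - u) * volume (Bad m N n) := by
          rw [bad_eq m N n, measure_biUnion₀ hWc
            (fun w hw w' hw' hne => (cyl_disjoint (by rw [hw.1, hw'.1]) hne).aedisjoint)
            (fun w hw => cyl_nullMeasurable w hw.2.1)]
      _ ≤ ENNReal.ofReal (1 - u) *
            ENNReal.ofReal (∏ i ∈ Finset.Ico N (N+n), (1 - 1/(m i : ℝ))) :=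
          mul_le_mul_right ih _
      _ = ENNReal.ofReal (∏ i ∈ Finset.Ico N (N+(n+1)), (1 - 1/(m i : ℝ))) := by
          rw [← ENNReal.ofReal_mul (by linarith)]
          congr 1
          rw [show N + (n+1) = (N+n) + 1 by omega,
            Finset.prod_Ico_succ_top (by omega : N ≤ N + n)]
          rw [hu]
          ring


lemma prod_tendsto (m : ℕ → ℕ) (hm : ∀ i, 1 ≤ m i)
    (hns : ¬ Summable (fun i => 1/(m i : ℝ))) (N : ℕ) :
    Tendsto (fun n => ∏ i ∈ Finset.Ico N (N+n), (1 - 1/(m i:ℝ))) atTop (nhds 0) := by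
  have hpos : ∀ i, 0 ≤ 1/(m i:ℝ) := fun i => by positivity
  have hle1 : ∀ i, 1/(m i:ℝ) ≤ 1 := fun i => by
    have h1 : (1:ℝ) ≤ (m i : ℝ) := by exact_mod_cast hm i
    rw [div_le_one (by linarith)]; linarith
  have hS : Tendsto (fun k => ∑ i ∈ Finset.range k, 1/(m i:ℝ)) atTop atTop :=
    (not_summable_iff_tendsto_nat_atTop_of_nonneg hpos).mp hns
  have hS1 : Tendsto (fun n => ∑ i ∈ Finset.range (N+n), 1/(m i:ℝ)) atTop atTop := by
    have h := hS.comp (tendsto_add_atTop_nat N)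
    exact h.congr (fun n => by simp [Function.comp, Nat.add_comm])
  have hS2 : Tendsto (fun n => ∑ i ∈ Finset.Ico N (N+n), 1/(m i:ℝ)) atTop atTop := by
    have heq : ∀ n, ∑ i ∈ Finset.Ico N (N+n), 1/(m i:ℝ)
        = ∑ i ∈ Finset.range (N+n), 1/(m i:ℝ) + -∑ i ∈ Finset.range N, 1/(m i:ℝ) := by
      intro n
      rw [Finset.sum_Ico_eq_sub _ (by omega : N ≤ N + n), sub_eq_add_neg]
    simp only [heq]
    exact tendsto_atTop_add_const_right atTop _ hS1
  have hexp : Tendsto (fun n => Real.exp (-(∑ i ∈ Finset.Ico N (N+n), 1/(m i:ℝ))))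
      atTop (nhds 0) :=
    Real.tendsto_exp_atBot.comp (tendsto_neg_atTop_atBot.comp hS2)
  apply tendsto_of_tendsto_of_tendsto_of_le_of_le tendsto_const_nhds hexp
  · intro n
    apply Finset.prod_nonneg
    intro i _
    linarith [hle1 i]
  · intro n
    calc ∏ i ∈ Finset.Ico N (N+n), (1 - 1/(m i:ℝ))
        ≤ ∏ i ∈ Finset.Ico N (N+n), Real.exp (-(1/(m i:ℝ))) := by
          apply Finset.prod_le_prod
          · intro i _; linarith [hle1 i]
          · intro i _
            have := Real.add_one_le_exp (-(1/(m i:ℝ)))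
            linarith
      _ = Real.exp (-(∑ i ∈ Finset.Ico N (N+n), 1/(m i:ℝ))) := by
          rw [← Real.exp_sum]
          congr 1
          rw [← Finset.sum_neg_distrib]

end BB

theorem borel_bernstein_divergence (b : ℕ → ℝ) (hb : ∀ n, 0 < b n)
    (hsum : ¬ Summable (fun n => 1 / b n)) :
    ∀ᵐ x ∂(volume.restrict (Set.Ico (0 : ℝ) 1)), Irrational x →
      {n : ℕ | b n ≤ (cfDigit n x : ℝ)}.Infinite := by
  classical
  set m : ℕ → ℕ := fun i => ⌈b (i+1)⌉₊ with hm_def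
  have hm1 : ∀ i, 1 ≤ m i := fun i => Nat.ceil_pos.mpr (hb _)
  have hmr_pos : ∀ i, (0:ℝ) < (m i : ℝ) := fun i => by exact_mod_cast hm1 i
  have hns : ¬ Summable (fun i => 1/(m i : ℝ)) := by
    intro hS
    have hle : ∀ i, (m i : ℝ) ≤ b (i+1) + 1 := fun i => (Nat.ceil_lt_add_one (hb _).le).le
    have hS1 : Summable (fun i => 1/(b (i+1) + 1)) := by
      refine Summable.of_nonneg_of_le (fun i => by have := hb (i+1); positivity)
        (fun i => one_div_le_one_div_of_le (hmr_pos i) (hle i)) hS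
    have htz : Tendsto (fun i => 1/(b (i+1) + 1)) atTop (nhds 0) := hS1.tendsto_atTop_zero
    have hev : ∀ᶠ i in atTop, 1/(b (i+1) + 1) < 1/2 :=
      htz.eventually_lt_const (by norm_num : (0:ℝ) < 1/2)
    have hev2 : ∀ᶠ i in atTop, ‖1/(b (i+1))‖ ≤ 2 * (1/(b (i+1)+1)) := by
      filter_upwards [hev] with i hi
      have hbi := hb (i+1)
      have h1 : 1 ≤ b (i+1) := by
        by_contra h
        push_neg at h
        have h2 : (1:ℝ)/2 ≤ 1/(b (i+1)+1) :=
          one_div_le_one_div_of_le (by linarith) (by linarith)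
        linarith
      rw [Real.norm_eq_abs, abs_of_nonneg (by positivity),
        show 2*(1/(b (i+1)+1)) = 2/(b (i+1)+1) by ring,
        div_le_div_iff₀ hbi (by linarith)]
      linarith
    have hS2 : Summable (fun i => 1/(b (i+1))) := by
      apply Summable.of_norm_bounded_eventually (hS1.mul_left 2)
      rwa [Nat.cofinite_eq_atTop]
    exact hsum ((summable_nat_add_iff 1).mp hS2)
  set K : ℕ → Set ℝ := fun N => {x | x ∈ BB.G ∧ ∀ i, N ≤ i → BB.Dg i x < m i} with hK
  have hKnull : ∀ N, volume (K N) = 0 := by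
    intro N
    have hsub : ∀ n, K N ⊆ BB.Bad m N n := fun n x hx => ⟨hx.1, fun i h1 _ => hx.2 i h1⟩
    have hle : ∀ n, volume (K N) ≤
        ENNReal.ofReal (∏ i ∈ Finset.Ico N (N+n), (1 - 1/(m i:ℝ))) :=
      fun n => (measure_mono (hsub n)).trans (BB.bad_vol m hm1 N n)
    have htend : Tendsto
        (fun n => ENNReal.ofReal (∏ i ∈ Finset.Ico N (N+n), (1 - 1/(m i:ℝ))))
        atTop (nhds 0) := by
      rw [show (0:ENNReal) = ENNReal.ofReal 0 by simp]
      exact (ENNReal.continuous_ofReal.tendsto 0).comp (BB.prod_tendsto m hm1 hns N)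
    exact le_antisymm (ge_of_tendsto htend (Filter.Eventually.of_forall hle)) zero_le
  have hUnull : volume (⋃ N, K N) = 0 := measure_iUnion_null hKnull
  rw [ae_restrict_iff' measurableSet_Ico, ae_iff]
  apply measure_mono_null _ hUnull
  intro x hx
  simp only [mem_setOf_eq] at hx
  push_neg at hx
  obtain ⟨hxI, hxirr, hfin⟩ := hx
  have hxG : x ∈ BB.G := ⟨⟨lt_of_le_of_ne hxI.1 (Ne.symm hxirr.ne_zero), hxI.2⟩, hxirr⟩
  simp only [mem_iUnion]
  by_contra hK'
  push_neg at hK'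
  apply (Set.not_infinite.mpr hfin)
  apply Set.infinite_of_not_bddAbove
  rintro ⟨M, hM⟩
  have hKM : ¬ (∀ i, M+1 ≤ i → BB.Dg i x < m i) := fun h => hK' (M+1) ⟨hxG, h⟩
  push_neg at hKM
  obtain ⟨i, hiM, hge⟩ := hKM
  have hmem : (i+1) ∈ {n : ℕ | b n ≤ (cfDigit n x : ℝ)} := by
    have h1 : cfDigit (i+1) x = BB.Dg i x := by
      simp [cfDigit, BB.Dg]
    show b (i+1) ≤ (cfDigit (i+1) x : ℝ)
    rw [h1]
    calc b (i+1) ≤ (⌈b (i+1)⌉₊ : ℝ) := Nat.le_ceil _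
      _ ≤ (BB.Dg i x : ℝ) := by exact_mod_cast hge
  have h2 := hM hmem
  omega
end

section
/- Let (d_n) be a sequence of positive integers tending to infinity. Then a_n(x) = d_n holds for infinitely many n with Lebesgue measure 0 or 1, according as Σ_n 1/d_n² is finite or infinite. -/
open MeasureTheory Filter Set
open scoped ENNReal

namespace CF

noncomputable def D (n : ℕ) (x : ℝ) : ℕ := ⌊1 / (gaussMap^[n] x)⌋₊

lemma cfDigit_succ (n : ℕ) (x : ℝ) : cfDigit (n + 1) x = D n x := rfl

lemma D_succ (n : ℕ) (x : ℝ) : D (n + 1) x = D n (gaussMap x) := by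
  simp [D, Function.iterate_succ_apply]

lemma irrational_inv {x : ℝ} (hx : Irrational x) : Irrational x⁻¹ := by
  rintro ⟨q, hq⟩
  rcases eq_or_ne q 0 with rfl | hq0
  · have : x = 0 := by
      have : x⁻¹ = 0 := by rw [← hq]; simp
      simpa [inv_eq_zero] using this
    exact (hx.ne_zero) this
  · exact hx ⟨q⁻¹, by rw [Rat.cast_inv, hq, inv_inv]⟩

lemma irrational_one_div {x : ℝ} (hx : Irrational x) : Irrational (1 / x) := by
  simpa [one_div] using irrational_inv hx

noncomputable def psi (k : ℕ) (t : ℝ) : ℝ := 1 / ((k : ℝ) + t)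

lemma gaussMap_eq_fract {x : ℝ} (hx : x ≠ 0) : gaussMap x = Int.fract (1 / x) := by
  rw [gaussMap, if_neg hx, Int.self_sub_floor]

lemma one_lt_one_div {x : ℝ} (hx : x ∈ Ioo (0:ℝ) 1) : 1 < 1 / x := by
  rw [lt_div_iff₀ hx.1]; linarith [hx.2]

lemma D0_cast {x : ℝ} (hx : x ∈ Ioo (0:ℝ) 1) : ((D 0 x : ℝ)) = (⌊1 / x⌋ : ℤ) := by
  have hx0 := hx.1
  have h0 : (0:ℤ) ≤ ⌊1 / x⌋ := Int.floor_nonneg.2 (by positivity)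
  simp only [D, Function.iterate_zero, id_eq]
  rw [← Int.floor_toNat, ← Int.cast_natCast, Int.toNat_of_nonneg h0]


lemma gaussMap_mem_Ioo {x : ℝ} (hx : x ∈ Ioo (0:ℝ) 1) (hirr : Irrational x) :
    gaussMap x ∈ Ioo (0:ℝ) 1 := by
  rw [gaussMap_eq_fract hx.1.ne']
  refine ⟨?_, Int.fract_lt_one _⟩
  rcases lt_or_eq_of_le (Int.fract_nonneg (1 / x)) with h | h
  · exact h
  · exfalso
    have : (1 / x : ℝ) = ⌊1 / x⌋ := by
      have := Int.self_sub_floor (1 / x); rw [← this] at h; linarith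
    exact (irrational_one_div hirr).ne_int _ this

lemma gaussMap_irrational {x : ℝ} (hx : x ∈ Ioo (0:ℝ) 1) (hirr : Irrational x) :
    Irrational (gaussMap x) := by
  rw [gaussMap_eq_fract hx.1.ne']
  exact (irrational_one_div hirr).sub_intCast _

lemma one_le_D0 {x : ℝ} (hx : x ∈ Ioo (0:ℝ) 1) : 1 ≤ D 0 x := by
  have := one_lt_one_div hx
  simp only [D, Function.iterate_zero, id_eq]
  exact Nat.le_floor (by exact_mod_cast this.le)

lemma psi_D0_gaussMap {x : ℝ} (hx : x ∈ Ioo (0:ℝ) 1) : psi (D 0 x) (gaussMap x) = x := by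
  have h1 : ((D 0 x : ℝ)) + gaussMap x = 1 / x := by
    rw [gaussMap, if_neg hx.1.ne', D0_cast hx]; ring
  rw [psi, h1, one_div_one_div]

lemma psi_mem {k : ℕ} (hk : 1 ≤ k) {t : ℝ} (ht : t ∈ Ioo (0:ℝ) 1) :
    psi k t ∈ Ioo (1 / ((k:ℝ) + 1)) (1 / (k:ℝ)) := by
  have hk0 : (0:ℝ) < k := by exact_mod_cast hk
  constructor
  · apply one_div_lt_one_div_of_lt (by linarith [ht.1, hk0]) (by linarith [ht.2])
  · apply one_div_lt_one_div_of_lt hk0 (by linarith [ht.1])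

lemma psi_mem_Ioo {k : ℕ} (hk : 1 ≤ k) {t : ℝ} (ht : t ∈ Ioo (0:ℝ) 1) :
    psi k t ∈ Ioo (0:ℝ) 1 := by
  have h := psi_mem hk ht
  have hk0 : (0:ℝ) < k := by exact_mod_cast hk
  have hk1 : (1:ℝ) ≤ k := by exact_mod_cast hk
  constructor
  · have : (0:ℝ) < 1 / ((k:ℝ)+1) := by positivity
    linarith [h.1]
  · have : 1 / (k:ℝ) ≤ 1 := by rw [div_le_one hk0]; exact hk1
    linarith [h.2]

lemma one_div_psi {k : ℕ} {t : ℝ} (h : (0:ℝ) < (k:ℝ) + t) : 1 / psi k t = (k:ℝ) + t := by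
  rw [psi, one_div_one_div]

lemma D0_psi {k : ℕ} (hk : 1 ≤ k) {t : ℝ} (ht : t ∈ Ioo (0:ℝ) 1) : D 0 (psi k t) = k := by
  have hk0 : (0:ℝ) < k := by exact_mod_cast hk
  simp only [D, Function.iterate_zero, id_eq]
  rw [one_div_psi (by have := ht.1; linarith)]
  rw [Nat.floor_eq_iff (by linarith [ht.1, hk0] : (0:ℝ) ≤ (k:ℝ) + t)]
  constructor
  · linarith [ht.1]
  · push_cast; linarith [ht.2]

lemma gaussMap_psi {k : ℕ} (hk : 1 ≤ k) {t : ℝ} (ht : t ∈ Ioo (0:ℝ) 1) :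
    gaussMap (psi k t) = t := by
  have hk0 : (0:ℝ) < k := by exact_mod_cast hk
  have hpos : (0:ℝ) < (k:ℝ) + t := by linarith [ht.1]
  have hne : psi k t ≠ 0 := by
    rw [psi]; positivity
  rw [gaussMap_eq_fract hne, one_div_psi hpos]
  rw [add_comm, Int.fract_add_natCast, Int.fract_eq_self.2 ⟨ht.1.le, ht.2⟩]

lemma psi_irrational {k : ℕ} {t : ℝ} (ht : Irrational t) : Irrational (psi k t) := by
  rw [psi]
  exact irrational_one_div (by simpa using ht.natCast_add k)


noncomputable def Phi : List ℕ → ℝ → ℝ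
  | [], t => t
  | k :: b, t => psi k (Phi b t)

@[simp] lemma Phi_nil (t : ℝ) : Phi [] t = t := rfl
@[simp] lemma Phi_cons (k : ℕ) (b : List ℕ) (t : ℝ) : Phi (k :: b) t = psi k (Phi b t) := rfl

lemma Phi_append (b : List ℕ) (k : ℕ) (t : ℝ) : Phi (b ++ [k]) t = Phi b (psi k t) := by
  induction b with
  | nil => rfl
  | cons j b ih => simp [ih]

def Pos (b : List ℕ) : Prop := ∀ k ∈ b, 1 ≤ k

lemma Pos_nil : Pos [] := by intro k hk; simp at hk
lemma Pos_cons {k : ℕ} {b : List ℕ} (hk : 1 ≤ k) (hb : Pos b) : Pos (k :: b) := by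
  intro j hj; rcases List.mem_cons.1 hj with rfl | h; exact hk; exact hb j h
lemma Pos_of_cons {k : ℕ} {b : List ℕ} (h : Pos (k :: b)) : 1 ≤ k ∧ Pos b :=
  ⟨h k (by simp), fun j hj => h j (by simp [hj])⟩
lemma Pos_append {b : List ℕ} {k : ℕ} (hb : Pos b) (hk : 1 ≤ k) : Pos (b ++ [k]) := by
  intro j hj; rcases List.mem_append.1 hj with h | h
  · exact hb j h
  · simp at h; omega

/-- continuant quadruple `(a, B, c, d)` so that `Phi b t = (a t + B)/(c t + d)`. -/
def cont : List ℕ → ℕ × ℕ × ℕ × ℕ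
  | [] => (1, 0, 0, 1)
  | k :: b =>
    ((cont b).2.2.1, (cont b).2.2.2, (cont b).1 + k * (cont b).2.2.1,
      (cont b).2.1 + k * (cont b).2.2.2)

/-- all invariants we need, bundled -/
structure ContInv (b : List ℕ) : Prop where
  c_le_d : (cont b).2.2.1 ≤ (cont b).2.2.2
  one_le_d : 1 ≤ (cont b).2.2.2
  key : (cont b).1 + (cont b).2.2.1 ≤ (cont b).2.1 + (cont b).2.2.2
  B_le_d : (cont b).2.1 ≤ (cont b).2.2.2
  aB_le_cd : (cont b).1 + (cont b).2.1 ≤ (cont b).2.2.1 + (cont b).2.2.2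
  det : ((cont b).1 : ℤ) * (cont b).2.2.2 - (cont b).2.1 * (cont b).2.2.1 = 1 ∨
        ((cont b).1 : ℤ) * (cont b).2.2.2 - (cont b).2.1 * (cont b).2.2.1 = -1

lemma contInv (b : List ℕ) (hb : Pos b) : ContInv b := by
  induction b with
  | nil => exact ⟨by simp [cont], by simp [cont], by simp [cont], by simp [cont], by simp [cont], by simp [cont]⟩
  | cons k b ih =>
    obtain ⟨hk, hb'⟩ := Pos_of_cons hb
    obtain ⟨h1, h2, h3, h4, h5, h6⟩ := ih hb'
    rcases hc : cont b with ⟨a, B, c, d⟩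
    rw [hc] at h1 h2 h3 h4 h5 h6
    have hck : cont (k :: b) = (c, d, a + k * c, B + k * d) := by
      simp [cont, hc]
    refine ⟨?_, ?_, ?_, ?_, ?_, ?_⟩ <;> rw [hck] <;> dsimp only at h1 h2 h3 h4 h5 h6 ⊢
    · nlinarith
    · nlinarith
    · nlinarith
    · nlinarith
    · nlinarith
    · rcases h6 with h | h
      · right; push_cast at h ⊢; nlinarith
      · left; push_cast at h ⊢; nlinarith

noncomputable def ca (b : List ℕ) : ℝ := ((cont b).1 : ℝ)
noncomputable def cB (b : List ℕ) : ℝ := ((cont b).2.1 : ℝ)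
noncomputable def cc (b : List ℕ) : ℝ := ((cont b).2.2.1 : ℝ)
noncomputable def cd (b : List ℕ) : ℝ := ((cont b).2.2.2 : ℝ)

lemma ca_nonneg (b : List ℕ) : 0 ≤ ca b := Nat.cast_nonneg _
lemma cB_nonneg (b : List ℕ) : 0 ≤ cB b := Nat.cast_nonneg _
lemma cc_nonneg (b : List ℕ) : 0 ≤ cc b := Nat.cast_nonneg _

lemma one_le_cd {b : List ℕ} (hb : Pos b) : 1 ≤ cd b := by
  have := (contInv b hb).one_le_d; simp only [cd]; exact_mod_cast this

lemma cc_le_cd {b : List ℕ} (hb : Pos b) : cc b ≤ cd b := by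
  have := (contInv b hb).c_le_d; simp only [cc, cd]; exact_mod_cast this

lemma cB_le_cd {b : List ℕ} (hb : Pos b) : cB b ≤ cd b := by
  have := (contInv b hb).B_le_d; simp only [cB, cd]; exact_mod_cast this

lemma caB_le_ccd {b : List ℕ} (hb : Pos b) : ca b + cB b ≤ cc b + cd b := by
  have := (contInv b hb).aB_le_cd; simp only [ca, cB, cc, cd]; exact_mod_cast this

lemma detR {b : List ℕ} (hb : Pos b) :
    ca b * cd b - cB b * cc b = 1 ∨ ca b * cd b - cB b * cc b = -1 := by
  simp only [ca, cB, cc, cd]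
  rcases (contInv b hb).det with h | h
  · left
    have : (((cont b).1 : ℤ) * (cont b).2.2.2 - (cont b).2.1 * (cont b).2.2.1 : ℝ) = 1 := by
      exact_mod_cast congrArg (fun z : ℤ => (z : ℝ)) h
    push_cast at this; linarith
  · right
    have : (((cont b).1 : ℤ) * (cont b).2.2.2 - (cont b).2.1 * (cont b).2.2.1 : ℝ) = -1 := by
      exact_mod_cast congrArg (fun z : ℤ => (z : ℝ)) h
    push_cast at this; linarith

lemma denom_pos {b : List ℕ} (hb : Pos b) {t : ℝ} (ht : 0 ≤ t) : 0 < cc b * t + cd b := by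
  have h1 := one_le_cd hb
  have h2 := cc_nonneg b
  nlinarith

lemma phi_formula {b : List ℕ} (hb : Pos b) {t : ℝ} (ht : 0 ≤ t) :
    Phi b t = (ca b * t + cB b) / (cc b * t + cd b) := by
  induction b with
  | nil => simp [ca, cB, cc, cd, cont]
  | cons k b ih =>
    obtain ⟨hk, hb'⟩ := Pos_of_cons hb
    have hform := ih hb'
    have hden := denom_pos hb' (t := t) ht
    have hnum : 0 ≤ ca b * t + cB b := by
      have := ca_nonneg b; have := cB_nonneg b; nlinarith
    have hPhi_nonneg : 0 ≤ Phi b t := by rw [hform]; positivity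
    have hk1 : (1:ℝ) ≤ (k:ℝ) := by exact_mod_cast hk
    have hkP : 0 < (k:ℝ) + Phi b t := by linarith
    rcases hc : cont b with ⟨A, B, C, Dd⟩
    have hck : cont (k :: b) = (C, Dd, A + k * C, B + k * Dd) := by simp [cont, hc]
    have e1 : ca (k :: b) = cc b := by simp [ca, cc, hck, hc]
    have e2 : cB (k :: b) = cd b := by simp [cB, cd, hck, hc]
    have e3 : cc (k :: b) = ca b + k * cc b := by
      simp only [cc, ca, hck, hc]; push_cast; ring
    have e4 : cd (k :: b) = cB b + k * cd b := by
      simp only [cd, cB, hck, hc]; push_cast; ring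
    rw [Phi_cons, hform, psi, e1, e2, e3, e4]
    have h3 : (k:ℝ) + (ca b * t + cB b) / (cc b * t + cd b)
        = ((k:ℝ) * (cc b * t + cd b) + (ca b * t + cB b)) / (cc b * t + cd b) := by
      rw [add_div' _ _ _ hden.ne']
    have h4 : (ca b + ↑k * cc b) * t + (cB b + ↑k * cd b)
        = (k:ℝ) * (cc b * t + cd b) + (ca b * t + cB b) := by ring
    rw [h3, one_div_div, h4]

lemma phi_diff {b : List ℕ} (hb : Pos b) {s t : ℝ} (hs : 0 ≤ s) (ht : 0 ≤ t) :
    |Phi b s - Phi b t| = |s - t| / ((cc b * s + cd b) * (cc b * t + cd b)) := by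
  have hds := denom_pos hb hs
  have hdt := denom_pos hb ht
  rw [phi_formula hb hs, phi_formula hb ht, div_sub_div _ _ hds.ne' hdt.ne']
  have hnum : (ca b * s + cB b) * (cc b * t + cd b) - (cc b * s + cd b) * (ca b * t + cB b)
      = (ca b * cd b - cB b * cc b) * (s - t) := by ring
  rw [abs_div, hnum, abs_mul]
  have : |ca b * cd b - cB b * cc b| = 1 := by
    rcases detR hb with h | h <;> rw [h] <;> simp
  rw [this, one_mul, abs_of_pos (mul_pos hds hdt)]

lemma phi_inj {b : List ℕ} (hb : Pos b) {s t : ℝ} (hs : 0 ≤ s) (ht : 0 ≤ t)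
    (h : Phi b s = Phi b t) : s = t := by
  have := phi_diff hb hs ht
  rw [h, sub_self, abs_zero, eq_comm, div_eq_zero_iff, abs_eq_zero] at this
  have hds := denom_pos hb hs
  have hdt := denom_pos hb ht
  rcases this with h' | h'
  · linarith [abs_nonneg (s - t), sub_eq_zero.1 h']
  · nlinarith

lemma phi_mem_Icc {b : List ℕ} (hb : Pos b) {t : ℝ} (ht : t ∈ Icc (0:ℝ) 1) :
    Phi b t ∈ Icc (0:ℝ) 1 := by
  have hd := denom_pos hb ht.1
  rw [phi_formula hb ht.1]
  constructor
  · have := ca_nonneg b; have := cB_nonneg b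
    apply div_nonneg _ hd.le; nlinarith [ht.1]
  · rw [div_le_one hd]
    have h1 := cB_le_cd hb
    have h2 := caB_le_ccd hb
    nlinarith [ht.1, ht.2, mul_nonneg (sub_nonneg.2 h1) (sub_nonneg.2 ht.2),
      mul_nonneg (sub_nonneg.2 h2) ht.1]

lemma irrational_of_phi_irrational {b : List ℕ} (hb : Pos b) {t : ℝ} (ht : 0 ≤ t)
    (h : Irrational (Phi b t)) : Irrational t := by
  by_contra hrat
  rw [Irrational] at hrat
  push_neg at hrat
  obtain ⟨q, hq⟩ := hrat
  have hq0 : 0 ≤ q := by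
    have : ((q:ℝ)) = t := hq
    exact_mod_cast this ▸ ht
  apply h
  rw [phi_formula hb ht, ← hq]
  have hdq : (0:ℚ) < (cont b).2.2.1 * q + (cont b).2.2.2 := by
    have h2 : (1:ℕ) ≤ (cont b).2.2.2 := (contInv b hb).one_le_d
    have : (1:ℚ) ≤ ((cont b).2.2.2 : ℚ) := by exact_mod_cast h2
    positivity
  refine ⟨((cont b).1 * q + (cont b).2.1) / ((cont b).2.2.1 * q + (cont b).2.2.2), ?_⟩
  rw [Rat.cast_div]
  push_cast
  simp [ca, cB, cc, cd]

noncomputable def dig (n : ℕ) (x : ℝ) : List ℕ := List.ofFn fun i : Fin n => D i x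

@[simp] lemma dig_length (n : ℕ) (x : ℝ) : (dig n x).length = n := by simp [dig]

lemma dig_succ (n : ℕ) (x : ℝ) : dig (n + 1) x = D 0 x :: dig n (gaussMap x) := by
  simp [dig, List.ofFn_succ, D_succ]

lemma phi_digits {b : List ℕ} (hb : Pos b) {t : ℝ} (ht : t ∈ Ioo (0:ℝ) 1)
    (hirr : Irrational t) :
    Phi b t ∈ Ioo (0:ℝ) 1 ∧ Irrational (Phi b t) ∧ dig b.length (Phi b t) = b ∧
      gaussMap^[b.length] (Phi b t) = t := by
  induction b with
  | nil => exact ⟨ht, hirr, by simp [dig], rfl⟩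
  | cons k b ih =>
    obtain ⟨hk, hb'⟩ := Pos_of_cons hb
    obtain ⟨hmem, hirr', hdig, hit⟩ := ih hb'
    refine ⟨psi_mem_Ioo hk hmem, psi_irrational hirr', ?_, ?_⟩
    · rw [List.length_cons, Phi_cons, dig_succ, gaussMap_psi hk hmem,
        D0_psi hk hmem, hdig]
    · rw [List.length_cons, Phi_cons, Function.iterate_succ_apply,
        gaussMap_psi hk hmem, hit]

lemma digits_phi {x : ℝ} (hx : x ∈ Ioo (0:ℝ) 1) (hirr : Irrational x) (n : ℕ) :
    Phi (dig n x) (gaussMap^[n] x) = x ∧ gaussMap^[n] x ∈ Ioo (0:ℝ) 1 ∧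
      Irrational (gaussMap^[n] x) ∧ Pos (dig n x) := by
  induction n generalizing x with
  | zero => exact ⟨rfl, hx, hirr, by intro k hk; simp [dig] at hk⟩
  | succ n ih =>
    have h1 := gaussMap_mem_Ioo hx hirr
    have h2 := gaussMap_irrational hx hirr
    obtain ⟨hphi, hmem, hirr', hpos⟩ := ih h1 h2
    refine ⟨?_, ?_, ?_, ?_⟩
    · rw [dig_succ, Phi_cons, Function.iterate_succ_apply, hphi, psi_D0_gaussMap hx]
    · rw [Function.iterate_succ_apply]; exact hmem
    · rw [Function.iterate_succ_apply]; exact hirr'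
    · rw [dig_succ]; exact Pos_cons (one_le_D0 hx) hpos

def Cyl (b : List ℕ) : Set ℝ := Phi b '' Ioo 0 1

lemma mem_cyl_self {x : ℝ} (hx : x ∈ Ioo (0:ℝ) 1) (hirr : Irrational x) (n : ℕ) :
    x ∈ Cyl (dig n x) :=
  ⟨gaussMap^[n] x, (digits_phi hx hirr n).2.1, (digits_phi hx hirr n).1⟩

lemma dig_eq_of_mem_cyl {b : List ℕ} (hb : Pos b) {x : ℝ} (hirr : Irrational x)
    (hx : x ∈ Cyl b) : dig b.length x = b := by
  obtain ⟨t, ht, rfl⟩ := hx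
  have htirr : Irrational t := irrational_of_phi_irrational hb ht.1.le hirr
  exact (phi_digits hb ht htirr).2.2.1

lemma cyl_subset_Icc {b : List ℕ} (hb : Pos b) : Cyl b ⊆ Icc (0:ℝ) 1 := by
  rintro x ⟨t, ht, rfl⟩
  exact phi_mem_Icc hb ⟨ht.1.le, ht.2.le⟩

lemma cyl_disjoint {b b' : List ℕ} (hb : Pos b) (hb' : Pos b')
    (hlen : b.length = b'.length) (hne : b ≠ b') :
    Disjoint (Cyl b ∩ {x | Irrational x}) (Cyl b' ∩ {x | Irrational x}) := by
  rw [Set.disjoint_left]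
  rintro x ⟨hx1, hx2⟩ ⟨hx1', _⟩
  have e1 := dig_eq_of_mem_cyl hb hx2 hx1
  have e2 := dig_eq_of_mem_cyl hb' hx2 hx1'
  rw [hlen] at e1
  exact hne (e1.symm.trans e2)

lemma psi_strictAnti {k : ℕ} (hk : 1 ≤ k) {s t : ℝ} (hs : 0 ≤ s) (hst : s < t) :
    psi k t < psi k s := by
  have hk1 : (1:ℝ) ≤ (k:ℝ) := by exact_mod_cast hk
  apply one_div_lt_one_div_of_lt
  · linarith
  · linarith

lemma psi_image {k : ℕ} (hk : 1 ≤ k) {u v : ℝ} (hu : 0 ≤ u) (huv : u < v) :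
    psi k '' Ioo u v = Ioo (psi k v) (psi k u) := by
  have hk1 : (1:ℝ) ≤ (k:ℝ) := by exact_mod_cast hk
  ext y
  constructor
  · rintro ⟨t, ht, rfl⟩
    exact ⟨psi_strictAnti hk (by linarith [ht.1]) ht.2, psi_strictAnti hk hu ht.1⟩
  · rintro ⟨h1, h2⟩
    have hyv : 0 < psi k v := by
      have hkv : (0:ℝ) < (k:ℝ) + v := by linarith
      rw [psi]; positivity
    have hy0 : 0 < y := lt_trans hyv h1
    refine ⟨1 / y - k, ⟨?_, ?_⟩, ?_⟩
    · have : 1 / psi k u < 1 / y := one_div_lt_one_div_of_lt hy0 h2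
      rw [one_div_psi (by linarith)] at this
      linarith
    · have : 1 / psi k v > 1 / y := one_div_lt_one_div_of_lt hyv h1
      rw [one_div_psi (by linarith)] at this
      linarith
    · rw [psi]
      have : (k:ℝ) + (1 / y - k) = 1 / y := by ring
      rw [this, one_div_one_div]

lemma phi_image {b : List ℕ} (hb : Pos b) {u v : ℝ} (hu : 0 ≤ u) (huv : u < v)
    (hv : v ≤ 1) :
    Phi b '' Ioo u v = Ioo (min (Phi b u) (Phi b v)) (max (Phi b u) (Phi b v)) := by
  induction b with
  | nil => simp [show Phi [] = id from funext Phi_nil, min_eq_left huv.le, max_eq_right huv.le]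
  | cons k b ih =>
    obtain ⟨hk, hb'⟩ := Pos_of_cons hb
    have him := ih hb'
    have hmu := phi_mem_Icc hb' (t := u) ⟨hu, by linarith⟩
    have hmv := phi_mem_Icc hb' (t := v) ⟨by linarith, hv⟩
    have hne : Phi b u ≠ Phi b v := fun h => absurd (phi_inj hb' hu (by linarith) h) huv.ne
    have hm0 : 0 ≤ min (Phi b u) (Phi b v) := le_min hmu.1 hmv.1
    have hmM : min (Phi b u) (Phi b v) < max (Phi b u) (Phi b v) := min_lt_max.2 hne
    have : Phi (k :: b) '' Ioo u v = psi k '' (Phi b '' Ioo u v) := by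
      rw [← Set.image_comp]; rfl
    rw [this, him, psi_image hk hm0 hmM]
    rcases le_total (Phi b u) (Phi b v) with h | h
    · rw [min_eq_left h, max_eq_right h]
      have h' : psi k (Phi b v) ≤ psi k (Phi b u) :=
        (psi_strictAnti hk hmu.1 (lt_of_le_of_ne h hne)).le
      rw [Phi_cons, Phi_cons, min_eq_right h', max_eq_left h']
    · rw [min_eq_right h, max_eq_left h]
      have hne' : Phi b v ≠ Phi b u := fun hh => hne hh.symm
      have h' : psi k (Phi b u) ≤ psi k (Phi b v) :=
        (psi_strictAnti hk hmv.1 (lt_of_le_of_ne h hne')).le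
      rw [Phi_cons, Phi_cons, min_eq_left h', max_eq_right h']

lemma volume_phi_image {b : List ℕ} (hb : Pos b) {u v : ℝ} (hu : 0 ≤ u) (huv : u < v)
    (hv : v ≤ 1) :
    volume (Phi b '' Ioo u v)
      = ENNReal.ofReal ((v - u) / ((cc b * u + cd b) * (cc b * v + cd b))) := by
  rw [phi_image hb hu huv hv, Real.volume_Ioo, max_sub_min_eq_abs]
  congr 1
  have h2 := phi_diff hb (le_of_lt (lt_of_le_of_lt hu huv)) hu (s := v) (t := u)
  rw [h2, abs_of_pos (by linarith : (0:ℝ) < v - u)]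
  ring_nf

lemma volume_cyl {b : List ℕ} (hb : Pos b) :
    volume (Cyl b) = ENNReal.ofReal (1 / (cd b * (cc b + cd b))) := by
  have := volume_phi_image hb (u := 0) (v := 1) le_rfl one_pos le_rfl
  rw [Cyl, this]
  norm_num

lemma cyl_append_eq (b : List ℕ) (k : ℕ) (hk : 1 ≤ k) :
    Cyl (b ++ [k]) = Phi b '' Ioo (1 / ((k:ℝ) + 1)) (1 / (k:ℝ)) := by
  have h1 : Cyl (b ++ [k]) = Phi b '' (psi k '' Ioo 0 1) := by
    rw [Cyl, ← Set.image_comp]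
    have : Phi (b ++ [k]) = Phi b ∘ psi k := funext fun t => Phi_append b k t
    rw [this]
  rw [h1, psi_image hk le_rfl one_pos]
  norm_num [psi]

lemma ratio_upper {C Dd K : ℝ} (hC : 0 ≤ C) (hCD : C ≤ Dd) (hD : 1 ≤ Dd) (hK : 1 ≤ K) :
    (1 / K - 1 / (K + 1)) / ((C * (1 / (K + 1)) + Dd) * (C * (1 / K) + Dd))
      ≤ (2 / K ^ 2) * (1 / (Dd * (C + Dd))) := by
  have hK0 : (0:ℝ) < K := by linarith
  have hK1 : (0:ℝ) < K + 1 := by linarith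
  have hD0 : (0:ℝ) < Dd := by linarith
  have hP : 0 < C * (1 / (K + 1)) + Dd := by positivity
  have hQ : 0 < C * (1 / K) + Dd := by positivity
  have hPge : Dd ≤ C * (1 / (K + 1)) + Dd := le_add_of_nonneg_left (by positivity)
  have hQge : Dd ≤ C * (1 / K) + Dd := le_add_of_nonneg_left (by positivity)
  have hdiff : 1 / K - 1 / (K + 1) = 1 / (K * (K + 1)) := by
    field_simp; ring
  rw [hdiff, div_div, div_mul_div_comm, mul_one]
  rw [div_le_div_iff₀ (by positivity) (by positivity)]
  have hCD2 : C + Dd ≤ 2 * Dd := by linarith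
  nlinarith [mul_le_mul hPge hQge hD0.le hP.le, mul_pos hK0 hK1, mul_pos hD0 hD0,
    mul_le_mul_of_nonneg_left hCD2 (mul_pos hK0 hD0).le,
    mul_nonneg (mul_nonneg hK0.le hK0.le) (mul_nonneg hD0.le hD0.le)]

lemma ratio_lower {C Dd K : ℝ} (hC : 0 ≤ C) (hCD : C ≤ Dd) (hD : 1 ≤ Dd) (hK : 1 ≤ K) :
    (1 / (8 * K ^ 2)) * (1 / (Dd * (C + Dd)))
      ≤ (1 / K - 1 / (K + 1)) / ((C * (1 / (K + 1)) + Dd) * (C * (1 / K) + Dd)) := by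
  have hK0 : (0:ℝ) < K := by linarith
  have hK1 : (0:ℝ) < K + 1 := by linarith
  have hD0 : (0:ℝ) < Dd := by linarith
  have hP : 0 < C * (1 / (K + 1)) + Dd := by positivity
  have hQ : 0 < C * (1 / K) + Dd := by positivity
  have hPle : C * (1 / (K + 1)) + Dd ≤ C + Dd := by
    have : C * (1 / (K + 1)) ≤ C := by
      apply mul_le_of_le_one_right hC
      rw [div_le_one hK1]; linarith
    linarith
  have hQle : C * (1 / K) + Dd ≤ C + Dd := by
    have : C * (1 / K) ≤ C := by
      apply mul_le_of_le_one_right hC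
      rw [div_le_one hK0]; linarith
    linarith
  have hdiff : 1 / K - 1 / (K + 1) = 1 / (K * (K + 1)) := by field_simp; ring
  rw [hdiff, div_div, div_mul_div_comm, mul_one]
  rw [div_le_div_iff₀ (by positivity) (by positivity)]
  have hCD2 : C + Dd ≤ 2 * Dd := by linarith
  have hPQ : (C * (1 / (K + 1)) + Dd) * (C * (1 / K) + Dd) ≤ (C + Dd) * (C + Dd) :=
    mul_le_mul hPle hQle hQ.le (by linarith)
  rw [one_mul, one_mul]
  have h1 : K * (K + 1) ≤ 2 * K ^ 2 := by nlinarith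
  have h2 : (C + Dd) * (C + Dd) ≤ 2 * (Dd * (C + Dd)) := by nlinarith
  have h3 : (C * (1 / (K + 1)) + Dd) * (C * (1 / K) + Dd) ≤ 2 * (Dd * (C + Dd)) :=
    hPQ.trans h2
  calc K * (K + 1) * ((C * (1 / (K + 1)) + Dd) * (C * (1 / K) + Dd))
      ≤ 2 * K ^ 2 * (2 * (Dd * (C + Dd))) :=
        mul_le_mul h1 h3 (mul_pos hP hQ).le (by positivity)
    _ ≤ 8 * K ^ 2 * (Dd * (C + Dd)) := by
        have hMD : 0 ≤ Dd * (C + Dd) := mul_nonneg hD0.le (by linarith)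
        nlinarith [sq_nonneg K, mul_nonneg hMD (sq_nonneg K)]

lemma volume_cyl_append {b : List ℕ} (hb : Pos b) {k : ℕ} (hk : 1 ≤ k) :
    volume (Cyl (b ++ [k])) = ENNReal.ofReal
      ((1 / (k:ℝ) - 1 / ((k:ℝ) + 1)) /
        ((cc b * (1 / ((k:ℝ) + 1)) + cd b) * (cc b * (1 / (k:ℝ)) + cd b))) := by
  have hk1 : (1:ℝ) ≤ (k:ℝ) := by exact_mod_cast hk
  have hu : (0:ℝ) ≤ 1 / ((k:ℝ) + 1) := by positivity
  have huv : 1 / ((k:ℝ) + 1) < 1 / (k:ℝ) :=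
    one_div_lt_one_div_of_lt (by linarith) (by linarith)
  have hv : 1 / (k:ℝ) ≤ 1 := by rw [div_le_one (by linarith)]; linarith
  rw [cyl_append_eq b k hk, volume_phi_image hb hu huv hv]

lemma volume_cyl_append_le {b : List ℕ} (hb : Pos b) {k : ℕ} (hk : 1 ≤ k) :
    volume (Cyl (b ++ [k])) ≤ ENNReal.ofReal (2 / (k:ℝ) ^ 2) * volume (Cyl b) := by
  have hk1 : (1:ℝ) ≤ (k:ℝ) := by exact_mod_cast hk
  rw [volume_cyl_append hb hk, volume_cyl hb, ← ENNReal.ofReal_mul (by positivity)]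
  apply ENNReal.ofReal_le_ofReal
  exact ratio_upper (cc_nonneg b) (cc_le_cd hb) (one_le_cd hb) hk1

lemma volume_cyl_append_ge {b : List ℕ} (hb : Pos b) {k : ℕ} (hk : 1 ≤ k) :
    ENNReal.ofReal (1 / (8 * (k:ℝ) ^ 2)) * volume (Cyl b) ≤ volume (Cyl (b ++ [k])) := by
  have hk1 : (1:ℝ) ≤ (k:ℝ) := by exact_mod_cast hk
  rw [volume_cyl_append hb hk, volume_cyl hb, ← ENNReal.ofReal_mul (by positivity)]
  apply ENNReal.ofReal_le_ofReal
  exact ratio_lower (cc_nonneg b) (cc_le_cd hb) (one_le_cd hb) hk1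

lemma measurableSet_cyl {b : List ℕ} (hb : Pos b) : MeasurableSet (Cyl b) := by
  rw [Cyl, phi_image hb le_rfl one_pos le_rfl]
  exact measurableSet_Ioo

lemma not_irrational_eq_range : {x : ℝ | ¬ Irrational x} = Set.range ((↑) : ℚ → ℝ) := by
  ext x
  simp [Irrational]

lemma rat_null : volume {x : ℝ | ¬ Irrational x} = 0 := by
  rw [not_irrational_eq_range]
  exact (Set.countable_range _).measure_zero _

lemma measurableSet_irr : MeasurableSet {x : ℝ | Irrational x} := by
  have h : {x : ℝ | Irrational x} = {x : ℝ | ¬ Irrational x}ᶜ := by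
    ext x; simp
  rw [h, not_irrational_eq_range]
  exact ((Set.countable_range _).measurableSet).compl

lemma volume_cyl_inter_irr {b : List ℕ} (hb : Pos b) :
    volume (Cyl b ∩ {x | Irrational x}) = volume (Cyl b) := by
  apply le_antisymm (measure_mono Set.inter_subset_left)
  have h1 : Cyl b ⊆ (Cyl b ∩ {x | Irrational x}) ∪ {x | ¬ Irrational x} := by
    intro x hx
    by_cases h : Irrational x
    · exact Or.inl ⟨hx, h⟩
    · exact Or.inr h
  calc volume (Cyl b) ≤ volume ((Cyl b ∩ {x | Irrational x}) ∪ {x | ¬ Irrational x}) :=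
        measure_mono h1
    _ ≤ volume (Cyl b ∩ {x | Irrational x}) + volume {x | ¬ Irrational x} :=
        measure_union_le _ _
    _ = volume (Cyl b ∩ {x | Irrational x}) := by rw [rat_null, add_zero]

lemma volume_biUnion_cyl {n : ℕ} {S : Set (List ℕ)} (hS : ∀ b ∈ S, Pos b ∧ b.length = n) :
    volume (⋃ b ∈ S, Cyl b ∩ {x | Irrational x}) = ∑' b : S, volume (Cyl (b : List ℕ)) := by
  rw [measure_biUnion (Set.to_countable S) ?disj ?meas]
  · congr 1
    funext b
    exact volume_cyl_inter_irr (hS b b.2).1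
  case disj =>
    intro b hb b' hb' hne
    exact cyl_disjoint (hS b hb).1 (hS b' hb').1
      (((hS b hb).2).trans ((hS b' hb').2).symm) hne
  case meas =>
    intro b hb
    exact (measurableSet_cyl (hS b hb).1).inter measurableSet_irr

lemma volume_one : volume (Icc (0:ℝ) 1) = 1 := by
  rw [Real.volume_Icc]; norm_num

lemma biUnion_cyl_subset {S : Set (List ℕ)} (hS : ∀ b ∈ S, Pos b) :
    (⋃ b ∈ S, Cyl b ∩ {x | Irrational x}) ⊆ Icc (0:ℝ) 1 := by
  intro x hx
  simp only [Set.mem_iUnion] at hx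
  obtain ⟨b, hb, hx1, _⟩ := hx
  exact cyl_subset_Icc (hS b hb) hx1

lemma tsum_cyl_le_one {n : ℕ} {S : Set (List ℕ)} (hS : ∀ b ∈ S, Pos b ∧ b.length = n) :
    ∑' b : S, volume (Cyl (b : List ℕ)) ≤ 1 := by
  rw [← volume_biUnion_cyl hS]
  calc volume (⋃ b ∈ S, Cyl b ∩ {x | Irrational x}) ≤ volume (Icc (0:ℝ) 1) :=
        measure_mono (biUnion_cyl_subset fun b hb => (hS b hb).1)
    _ = 1 := volume_one

lemma mem_Ioo_of_irrational {x : ℝ} (hx : x ∈ Icc (0:ℝ) 1) (hirr : Irrational x) :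
    x ∈ Ioo (0:ℝ) 1 := by
  constructor
  · rcases lt_or_eq_of_le hx.1 with h | h
    · exact h
    · exact absurd h.symm (by simpa using (hirr.ne_int 0))
  · rcases lt_or_eq_of_le hx.2 with h | h
    · exact h
    · exact absurd h (by simpa using (hirr.ne_int 1))

lemma dig_getD {n m : ℕ} (hm : m < n) (x : ℝ) : (dig n x).getD m 0 = D m x := by
  rw [dig, List.getD_eq_getElem _ _ (by simpa using hm)]
  simp

lemma dig_concat (n : ℕ) (x : ℝ) : dig (n + 1) x = dig n x ++ [D n x] := by
  rw [dig, List.ofFn_succ', dig]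
  simp [List.concat_eq_append]

def Lev (n : ℕ) : Set (List ℕ) := {b | Pos b ∧ b.length = n}

def Ev (n k : ℕ) : Set ℝ := ⋃ b ∈ Lev n, Cyl (b ++ [k]) ∩ {x | Irrational x}

lemma measurableSet_Ev (n k : ℕ) (hk : 1 ≤ k) : MeasurableSet (Ev n k) := by
  apply MeasurableSet.biUnion (Set.to_countable _)
  intro b hb
  exact (measurableSet_cyl (Pos_append hb.1 hk)).inter measurableSet_irr

lemma mem_Ev {x : ℝ} (hx : x ∈ Ioo (0:ℝ) 1) (hirr : Irrational x) {n k : ℕ}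
    (h : D n x = k) : x ∈ Ev n k := by
  have hlev : dig n x ∈ Lev n := ⟨(digits_phi hx hirr n).2.2.2, dig_length n x⟩
  refine Set.mem_biUnion hlev ⟨?_, hirr⟩
  rw [← h, ← dig_concat]
  exact mem_cyl_self hx hirr (n + 1)

lemma volume_Ev_le (n : ℕ) {k : ℕ} (hk : 1 ≤ k) :
    volume (Ev n k) ≤ ENNReal.ofReal (2 / (k:ℝ) ^ 2) := by
  have hS : ∀ b ∈ Lev n, Pos b ∧ b.length = n := fun b hb => ⟨hb.1, hb.2⟩
  calc volume (Ev n k)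
      ≤ ∑' b : Lev n, volume (Cyl ((b : List ℕ) ++ [k]) ∩ {x | Irrational x}) :=
        measure_biUnion_le _ (Set.to_countable _) _
    _ ≤ ∑' b : Lev n, ENNReal.ofReal (2 / (k:ℝ) ^ 2) * volume (Cyl (b : List ℕ)) := by
        apply ENNReal.tsum_le_tsum
        intro b
        calc volume (Cyl ((b : List ℕ) ++ [k]) ∩ {x | Irrational x})
            ≤ volume (Cyl ((b : List ℕ) ++ [k])) := measure_mono Set.inter_subset_left
          _ ≤ ENNReal.ofReal (2 / (k:ℝ) ^ 2) * volume (Cyl (b : List ℕ)) :=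
              volume_cyl_append_le b.2.1 hk
    _ = ENNReal.ofReal (2 / (k:ℝ) ^ 2) * ∑' b : Lev n, volume (Cyl (b : List ℕ)) :=
        ENNReal.tsum_mul_left
    _ ≤ ENNReal.ofReal (2 / (k:ℝ) ^ 2) * 1 := mul_le_mul_right (tsum_cyl_le_one hS) _
    _ = ENNReal.ofReal (2 / (k:ℝ) ^ 2) := mul_one _

def SSet (e : ℕ → ℕ) (N M : ℕ) : Set (List ℕ) :=
  {b | Pos b ∧ b.length = M ∧ ∀ m, N ≤ m → m < M → b.getD m 0 ≠ e m}

def HSet (e : ℕ → ℕ) (N M : ℕ) : Set ℝ := ⋃ b ∈ SSet e N M, Cyl b ∩ {x | Irrational x}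

def GSet (e : ℕ → ℕ) (N : ℕ) : Set ℝ :=
  {x | x ∈ Ioo (0:ℝ) 1 ∧ Irrational x ∧ ∀ m, N ≤ m → D m x ≠ e m}

lemma GSet_subset_HSet (e : ℕ → ℕ) (N M : ℕ) : GSet e N ⊆ HSet e N M := by
  rintro x ⟨hx, hirr, hD⟩
  have hmem : dig M x ∈ SSet e N M := by
    refine ⟨(digits_phi hx hirr M).2.2.2, dig_length M x, ?_⟩
    intro m hNm hmM
    rw [dig_getD hmM]
    exact hD m hNm
  exact Set.mem_biUnion hmem ⟨mem_cyl_self hx hirr M, hirr⟩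

lemma volume_HSet_le_one (e : ℕ → ℕ) (N M : ℕ) : volume (HSet e N M) ≤ 1 := by
  calc volume (HSet e N M) ≤ volume (Icc (0:ℝ) 1) :=
        measure_mono (biUnion_cyl_subset fun b hb => hb.1)
    _ = 1 := volume_one

lemma cyl_append_subset {b : List ℕ} (hb : Pos b) {k : ℕ} (hk : 1 ≤ k) :
    Cyl (b ++ [k]) ⊆ Cyl b := by
  have hk1 : (1:ℝ) ≤ (k:ℝ) := by exact_mod_cast hk
  rw [cyl_append_eq b k hk, Cyl]
  apply Set.image_mono
  apply Set.Ioo_subset_Ioo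
  · positivity
  · rw [div_le_one (by linarith)]; linarith

lemma diff_bound {b : List ℕ} (hb : Pos b) {k : ℕ} (hk : 1 ≤ k) :
    volume ((Cyl b ∩ {x | Irrational x}) \ (Cyl (b ++ [k]) ∩ {x | Irrational x}))
      ≤ ENNReal.ofReal (1 - 1 / (8 * (k:ℝ) ^ 2)) * volume (Cyl b) := by
  have hk1 : (1:ℝ) ≤ (k:ℝ) := by exact_mod_cast hk
  have hθ0 : (0:ℝ) ≤ 1 / (8 * (k:ℝ) ^ 2) := by positivity
  have hθ1 : 1 / (8 * (k:ℝ) ^ 2) ≤ 1 := by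
    rw [div_le_one (by positivity)]; nlinarith
  have hpos : Pos (b ++ [k]) := Pos_append hb hk
  have hsub : Cyl (b ++ [k]) ∩ {x | Irrational x} ⊆ Cyl b ∩ {x | Irrational x} :=
    Set.inter_subset_inter_left _ (cyl_append_subset hb hk)
  have hmeas : MeasurableSet (Cyl (b ++ [k]) ∩ {x | Irrational x}) :=
    (measurableSet_cyl hpos).inter measurableSet_irr
  have hfin : volume (Cyl (b ++ [k]) ∩ {x | Irrational x}) ≠ ⊤ := by
    apply ne_top_of_le_ne_top ENNReal.one_ne_top
    calc volume (Cyl (b ++ [k]) ∩ {x | Irrational x})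
        ≤ volume (Icc (0:ℝ) 1) :=
          measure_mono ((Set.inter_subset_left).trans (cyl_subset_Icc hpos))
      _ = 1 := volume_one
  rw [measure_diff hsub hmeas.nullMeasurableSet hfin]
  rw [volume_cyl_inter_irr hb, volume_cyl_inter_irr hpos]
  rw [tsub_le_iff_right]
  calc volume (Cyl b)
      = (ENNReal.ofReal (1 - 1 / (8 * (k:ℝ) ^ 2)) + ENNReal.ofReal (1 / (8 * (k:ℝ) ^ 2)))
          * volume (Cyl b) := by
        rw [← ENNReal.ofReal_add (by linarith) hθ0, sub_add_cancel, ENNReal.ofReal_one, one_mul]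
    _ = ENNReal.ofReal (1 - 1 / (8 * (k:ℝ) ^ 2)) * volume (Cyl b)
          + ENNReal.ofReal (1 / (8 * (k:ℝ) ^ 2)) * volume (Cyl b) := add_mul _ _ _
    _ ≤ ENNReal.ofReal (1 - 1 / (8 * (k:ℝ) ^ 2)) * volume (Cyl b)
          + volume (Cyl (b ++ [k])) := add_le_add_right (volume_cyl_append_ge hb hk) _

lemma HSet_step (e : ℕ → ℕ) {N M : ℕ} (hNM : N ≤ M) (hk : 1 ≤ e M) :
    volume (HSet e N (M + 1))
      ≤ ENNReal.ofReal (1 - 1 / (8 * ((e M):ℝ) ^ 2)) * volume (HSet e N M) := by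
  have hsub : HSet e N (M + 1) ⊆
      ⋃ b ∈ SSet e N M, ((Cyl b ∩ {x | Irrational x}) \ (Cyl (b ++ [e M]) ∩ {x | Irrational x})) := by
    intro x hx
    simp only [HSet, Set.mem_iUnion] at hx
    obtain ⟨b', hb', hxc, hxirr⟩ := hx
    have hxIoo : x ∈ Ioo (0:ℝ) 1 :=
      mem_Ioo_of_irrational (cyl_subset_Icc hb'.1 hxc) hxirr
    have hdig : dig (M + 1) x = b' := by
      have := dig_eq_of_mem_cyl hb'.1 hxirr hxc
      rwa [hb'.2.1] at this
    have hbS : dig M x ∈ SSet e N M := by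
      refine ⟨(digits_phi hxIoo hxirr M).2.2.2, dig_length M x, ?_⟩
      intro m hNm hmM
      rw [dig_getD hmM]
      have h1 : (dig (M+1) x).getD m 0 = D m x := dig_getD (by omega) x
      rw [hdig] at h1
      rw [← h1]
      exact hb'.2.2 m hNm (by omega)
    refine Set.mem_biUnion hbS ⟨⟨mem_cyl_self hxIoo hxirr M, hxirr⟩, ?_⟩
    rintro ⟨hxck, -⟩
    have hlen : (dig M x ++ [e M]).length = M + 1 := by simp
    have := dig_eq_of_mem_cyl (Pos_append (digits_phi hxIoo hxirr M).2.2.2 hk) hxirr hxck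
    rw [hlen, hdig] at this
    have hD : b'.getD M 0 = e M := by
      rw [this]
      rw [List.getD_append_right _ _ _ _ (by simp : (dig M x).length ≤ M)]
      simp
    exact hb'.2.2 M hNM (by omega) hD
  calc volume (HSet e N (M + 1))
      ≤ volume (⋃ b ∈ SSet e N M,
          ((Cyl b ∩ {x | Irrational x}) \ (Cyl (b ++ [e M]) ∩ {x | Irrational x}))) :=
        measure_mono hsub
    _ ≤ ∑' b : SSet e N M,
          volume (((Cyl (b:List ℕ) ∩ {x | Irrational x})
            \ (Cyl ((b:List ℕ) ++ [e M]) ∩ {x | Irrational x}))) :=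
        measure_biUnion_le _ (Set.to_countable _) _
    _ ≤ ∑' b : SSet e N M,
          ENNReal.ofReal (1 - 1 / (8 * ((e M):ℝ) ^ 2)) * volume (Cyl (b:List ℕ)) :=
        ENNReal.tsum_le_tsum fun b => diff_bound b.2.1 hk
    _ = ENNReal.ofReal (1 - 1 / (8 * ((e M):ℝ) ^ 2)) * ∑' b : SSet e N M, volume (Cyl (b:List ℕ)) :=
        ENNReal.tsum_mul_left
    _ = ENNReal.ofReal (1 - 1 / (8 * ((e M):ℝ) ^ 2)) * volume (HSet e N M) := by
        rw [HSet, volume_biUnion_cyl (n := M) fun b hb => ⟨hb.1, hb.2.1⟩]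

lemma HSet_prod (e : ℕ → ℕ) (he : ∀ m, 1 ≤ e m) (N : ℕ) :
    ∀ M, N ≤ M → volume (HSet e N M)
      ≤ ENNReal.ofReal (∏ m ∈ Finset.Ico N M, (1 - 1 / (8 * ((e m):ℝ) ^ 2))) := by
  intro M
  induction M with
  | zero =>
    intro hN
    have : N = 0 := Nat.le_zero.1 hN
    subst this
    simpa using volume_HSet_le_one e 0 0
  | succ M ih =>
    intro hN
    have hfact : ∀ m, (0:ℝ) ≤ 1 - 1 / (8 * ((e m):ℝ) ^ 2) := by
      intro m
      have h1 : (1:ℝ) ≤ ((e m):ℝ) := by exact_mod_cast he m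
      have : 1 / (8 * ((e m):ℝ) ^ 2) ≤ 1 := by
        rw [div_le_one (by positivity)]; nlinarith
      linarith
    rcases eq_or_lt_of_le hN with rfl | hlt
    · simpa using volume_HSet_le_one e (M + 1) (M + 1)
    · have hNM : N ≤ M := by omega
      calc volume (HSet e N (M + 1))
          ≤ ENNReal.ofReal (1 - 1 / (8 * ((e M):ℝ) ^ 2)) * volume (HSet e N M) :=
            HSet_step e hNM (he M)
        _ ≤ ENNReal.ofReal (1 - 1 / (8 * ((e M):ℝ) ^ 2))
              * ENNReal.ofReal (∏ m ∈ Finset.Ico N M, (1 - 1 / (8 * ((e m):ℝ) ^ 2))) :=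
            mul_le_mul_right (ih hNM) _
        _ = ENNReal.ofReal ((∏ m ∈ Finset.Ico N M, (1 - 1 / (8 * ((e m):ℝ) ^ 2)))
              * (1 - 1 / (8 * ((e M):ℝ) ^ 2))) := by
            rw [← ENNReal.ofReal_mul (hfact M), mul_comm]
        _ = ENNReal.ofReal (∏ m ∈ Finset.Ico N (M + 1), (1 - 1 / (8 * ((e m):ℝ) ^ 2))) := by
            rw [Finset.prod_Ico_succ_top hNM]

lemma prod_tendsto_zero (e : ℕ → ℕ) (he : ∀ m, 1 ≤ e m)
    (hdiv : ¬ Summable (fun m => 1 / ((e m):ℝ) ^ 2)) (N : ℕ) :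
    Tendsto (fun M => ∏ m ∈ Finset.Ico N M, (1 - 1 / (8 * ((e m):ℝ) ^ 2)))
      atTop (nhds 0) := by
  set θ : ℕ → ℝ := fun m => 1 / (8 * ((e m):ℝ) ^ 2) with hθ
  have hθ0 : ∀ m, 0 ≤ θ m := by intro m; positivity
  have hfact : ∀ m, (0:ℝ) ≤ 1 - θ m := by
    intro m
    have h1 : (1:ℝ) ≤ ((e m):ℝ) := by exact_mod_cast he m
    have : θ m ≤ 1 := by
      rw [hθ]; simp only []
      rw [div_le_one (by positivity)]; nlinarith
    linarith
  have hθdiv : ¬ Summable θ := by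
    intro hs
    apply hdiv
    have h8 : Summable (fun m => (8:ℝ) * θ m) := hs.mul_left 8
    apply h8.congr
    intro m
    rw [hθ]
    have h1 : (0:ℝ) < ((e m):ℝ) := by
      have := he m; positivity
    field_simp
  have hsum : Tendsto (fun M => ∑ m ∈ Finset.range M, θ m) atTop atTop :=
    (not_summable_iff_tendsto_nat_atTop_of_nonneg hθ0).1 hθdiv
  have hsumIco : Tendsto (fun M => ∑ m ∈ Finset.Ico N M, θ m) atTop atTop := by
    have hev : ∀ᶠ M in atTop, (∑ m ∈ Finset.range M, θ m) - (∑ m ∈ Finset.range N, θ m)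
        = ∑ m ∈ Finset.Ico N M, θ m := by
      filter_upwards [eventually_ge_atTop N] with M hM
      rw [Finset.sum_Ico_eq_sub _ hM]
    exact Tendsto.congr' hev (hsum.atTop_add tendsto_const_nhds) |>.congr' (by rfl) |>.mono_right le_rfl
  have hexp : Tendsto (fun M => Real.exp (-(∑ m ∈ Finset.Ico N M, θ m))) atTop (nhds 0) :=
    Real.tendsto_exp_atBot.comp (tendsto_neg_atTop_atBot.comp hsumIco)
  apply squeeze_zero
  · intro M
    exact Finset.prod_nonneg fun m _ => hfact m
  · intro M
    calc ∏ m ∈ Finset.Ico N M, (1 - θ m)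
        ≤ ∏ m ∈ Finset.Ico N M, Real.exp (-θ m) := by
          apply Finset.prod_le_prod (fun m _ => hfact m)
          intro m _
          linarith [Real.add_one_le_exp (-θ m)]
      _ = Real.exp (∑ m ∈ Finset.Ico N M, -θ m) := (Real.exp_sum _ _).symm
      _ = Real.exp (-(∑ m ∈ Finset.Ico N M, θ m)) := by rw [Finset.sum_neg_distrib]
  · exact hexp

lemma GSet_null (e : ℕ → ℕ) (he : ∀ m, 1 ≤ e m)
    (hdiv : ¬ Summable (fun m => 1 / ((e m):ℝ) ^ 2)) (N : ℕ) :
    volume (GSet e N) = 0 := by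
  have hb : ∀ M, N ≤ M → volume (GSet e N)
      ≤ ENNReal.ofReal (∏ m ∈ Finset.Ico N M, (1 - 1 / (8 * ((e m):ℝ) ^ 2))) := by
    intro M hM
    exact (measure_mono (GSet_subset_HSet e N M)).trans (HSet_prod e he N M hM)
  have htend : Tendsto (fun M => ENNReal.ofReal
      (∏ m ∈ Finset.Ico N M, (1 - 1 / (8 * ((e m):ℝ) ^ 2)))) atTop (nhds 0) := by
    have := (prod_tendsto_zero e he hdiv N)
    have h0 : (0:ℝ≥0∞) = ENNReal.ofReal 0 := by simp
    rw [h0]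
    exact (ENNReal.continuous_ofReal.tendsto 0).comp this
  have : volume (GSet e N) ≤ 0 :=
    ge_of_tendsto htend (by filter_upwards [eventually_ge_atTop N] with M hM using hb M hM)
  simpa using this

set_option maxHeartbeats 1000000 in
lemma limsup_Ev_null (d : ℕ → ℕ) (hd : ∀ n, 0 < d n)
    (hsum : Summable fun n => 1 / ((d n):ℝ) ^ 2) :
    volume (limsup (fun n => Ev n (d (n + 1))) atTop) = 0 := by
  apply measure_limsup_atTop_eq_zero
  have hs1 : Summable (fun n => 1 / ((d (n + 1)):ℝ) ^ 2) := by
    exact (summable_nat_add_iff 1).2 hsum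
  have hs2 : Summable (fun n => 2 / ((d (n + 1)):ℝ) ^ 2) := by
    apply (hs1.mul_left 2).congr
    intro n; ring
  have hle : (∑' n, volume (Ev n (d (n + 1))))
      ≤ ∑' n, ENNReal.ofReal (2 / ((d (n + 1)):ℝ) ^ 2) :=
    ENNReal.tsum_le_tsum fun n => volume_Ev_le n (hd (n + 1))
  have hne : (∑' n, ENNReal.ofReal (2 / ((d (n + 1)):ℝ) ^ 2)) ≠ ⊤ := by
    rw [← ENNReal.ofReal_tsum_of_nonneg (fun n => by positivity) hs2]
    exact ENNReal.ofReal_ne_top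
  exact ne_top_of_le_ne_top hne hle

end CF

theorem zero_one_law_digit_eq (d : ℕ → ℕ) (hd : ∀ n, 0 < d n)
    (hd_inf : Tendsto (fun n => (d n : ℝ)) atTop atTop) :
    ((Summable (fun n => 1 / (d n : ℝ) ^ 2) →
        (volume.restrict (Set.Ico (0 : ℝ) 1))
          {x | Irrational x ∧ {n : ℕ | cfDigit n x = d n}.Infinite} = 0) ∧
      (¬ Summable (fun n => 1 / (d n : ℝ) ^ 2) →
        (volume.restrict (Set.Ico (0 : ℝ) 1))
          {x | Irrational x ∧ {n : ℕ | cfDigit n x = d n}.Infinite} = 1)) := by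
  set T : Set ℝ := {x | Irrational x ∧ {n : ℕ | cfDigit n x = d n}.Infinite} with hT
  constructor
  · intro hsum
    rw [Measure.restrict_apply' measurableSet_Ico]
    have hsub : T ∩ Ico (0:ℝ) 1 ⊆ limsup (fun n => CF.Ev n (d (n + 1))) atTop := by
      rintro x ⟨⟨hirr, hinf⟩, hx⟩
      have hx0 : x ≠ 0 := by simpa using hirr.ne_int 0
      have hIoo : x ∈ Ioo (0:ℝ) 1 := ⟨lt_of_le_of_ne hx.1 (Ne.symm hx0), hx.2⟩
      rw [Filter.mem_limsup_iff_frequently_mem, frequently_atTop]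
      intro N
      have hfreq := Nat.frequently_atTop_iff_infinite.2 hinf
      rw [frequently_atTop] at hfreq
      obtain ⟨n, hn, hP⟩ := hfreq (N + 1)
      obtain ⟨m, rfl⟩ : ∃ m, n = m + 1 := ⟨n - 1, by omega⟩
      exact ⟨m, by omega, CF.mem_Ev hIoo hirr hP⟩
    exact measure_mono_null hsub (CF.limsup_Ev_null d hd hsum)
  · intro hdiv
    rw [Measure.restrict_apply' measurableSet_Ico]
    set e : ℕ → ℕ := fun m => d (m + 1) with he_def
    have he : ∀ m, 1 ≤ e m := fun m => hd (m + 1)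
    have hediv : ¬ Summable fun m => 1 / ((e m):ℝ) ^ 2 := by
      intro h
      exact hdiv ((summable_nat_add_iff 1).1 h)
    apply le_antisymm
    · calc volume (T ∩ Ico (0:ℝ) 1) ≤ volume (Ico (0:ℝ) 1) :=
            measure_mono Set.inter_subset_right
        _ = 1 := by rw [Real.volume_Ico]; norm_num
    · have hnull : volume (Ico (0:ℝ) 1 \ (T ∩ Ico (0:ℝ) 1)) = 0 := by
        apply measure_mono_null
          (?_ : Ico (0:ℝ) 1 \ (T ∩ Ico (0:ℝ) 1)
            ⊆ {x : ℝ | ¬ Irrational x} ∪ ⋃ N, CF.GSet e N)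
        · exact measure_union_null CF.rat_null
            (measure_iUnion_null fun N => CF.GSet_null e he hediv N)
        · rintro x ⟨hx, hxT⟩
          by_cases hirr : Irrational x
          · right
            have hx0 : x ≠ 0 := by simpa using hirr.ne_int 0
            have hIoo : x ∈ Ioo (0:ℝ) 1 := ⟨lt_of_le_of_ne hx.1 (Ne.symm hx0), hx.2⟩
            have hninf : ¬ {n : ℕ | cfDigit n x = d n}.Infinite := by
              intro h
              exact hxT ⟨⟨hirr, h⟩, hx⟩
            rw [← Nat.frequently_atTop_iff_infinite, Filter.not_frequently] at hninf
            rw [eventually_atTop] at hninf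
            obtain ⟨N, hN⟩ := hninf
            refine Set.mem_iUnion.2 ⟨N, hIoo, hirr, ?_⟩
            intro m hm
            exact hN (m + 1) (by omega)
          · exact Or.inl hirr
      have hmain : (1:ℝ≥0∞) ≤ volume (T ∩ Ico (0:ℝ) 1) := by
        have hIco : volume (Ico (0:ℝ) 1) = 1 := by rw [Real.volume_Ico]; norm_num
        calc (1:ℝ≥0∞) = volume (Ico (0:ℝ) 1) := hIco.symm
          _ ≤ volume ((T ∩ Ico (0:ℝ) 1) ∪ (Ico (0:ℝ) 1 \ (T ∩ Ico (0:ℝ) 1))) := by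
              apply measure_mono
              intro x hx
              by_cases h : x ∈ T ∩ Ico (0:ℝ) 1
              · exact Or.inl h
              · exact Or.inr ⟨hx, h⟩
          _ ≤ volume (T ∩ Ico (0:ℝ) 1) + volume (Ico (0:ℝ) 1 \ (T ∩ Ico (0:ℝ) 1)) :=
              measure_union_le _ _
          _ = volume (T ∩ Ico (0:ℝ) 1) := by rw [hnull, add_zero]
      exact hmain
end
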